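/- arXiv:1407.0334 — 3 statements merged into one kernel-verified Lean document; each statement's English description precedes it below -/
import Mathlib

section
/- The language UPOWER = {1^m : m = 2^n for some n ≥ 0} can be recognized by a PAFA: there exists a PAFA over the unary alphabet {1} whose language is exactly UPOWER. -/
/-!
A realtime private alternating finite automaton (PAFA) over input alphabet `α`.

* Common state components: `Fin kc`; private state components: `Fin kp`.
* Public game alphabet Γ = `Fin g`, private game alphabet Δ = `Fin d` (they are disjoint by
  construction, being the two summands of `Fin g ⊕ Fin d`), each of size at least 2.
* Tape symbols: `Option α`, with `none` the end-marker ¢.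
* The transition functions return either a single successor (`Sum.inl`, a non-branching move)
  or a family of successors indexed by the relevant game alphabet (`Sum.inr`, a branching move).
* Successors of universal branching moves indexed by public symbols must keep the private
  component unchanged.
* On input `w`, the automaton processes ¢ w ¢, making two transitions per tape symbol; this is
  realized by listing every tape symbol twice, one occurrence per transition.
-/
structure PAFA (α : Type) where
  kc : ℕ
  kp : ℕ
  g : ℕ
  d : ℕ
  g_ge : 2 ≤ g
  d_ge : 2 ≤ d
  /-- the set of universal states (`true` = universal; the rest are existential) -/
  isUniv : Fin kc × Fin kp → Bool
  /-- existential transition function: depends only on the common component, and yields either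
  a single successor common component or a family indexed by Γ -/
  δE : Fin kc → Fin kc ⊕ (Fin g → Fin kc)
  /-- universal transition function: yields either a single successor state or a family
  indexed by Γ ⊕ Δ -/
  δU : Fin kc × Fin kp → Option α → (Fin kc × Fin kp) ⊕ ((Fin g ⊕ Fin d) → Fin kc × Fin kp)
  /-- successors of universal branching moves indexed by public symbols have private component
  equal to the current one -/
  pub_private : ∀ s σ fam, δU s σ = Sum.inr fam → ∀ γ : Fin g, (fam (Sum.inl γ)).2 = s.2
  /-- the initial state (s_{c0}, s_{p0}) -/
  init : Fin kc × Fin kp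
  /-- the accepting common component q_a -/
  qa : Fin kc

namespace PAFA

variable {α : Type} (A : PAFA α)

/-- An existential strategy: assigns a public game symbol to each pair of a common state
component and a finite sequence over Γ (the public moves seen so far). -/
abbrev Strategy := Fin A.kc × List (Fin A.g) → Fin A.g

/-- One transition from state `st` with public-move history `h`, reading tape symbol `σ`:
existential branchings are resolved by the strategy `f`, universal branchings are resolved in
all possible ways, and `P` is the property required of each successor (together with its
updated history).  Non-branching moves do not count as moves and leave the history unchanged;
branching moves labeled by public symbols (existential moves and public universal moves)
append their Γ-label to the history; private universal moves leave it unchanged. -/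
def Step (f : A.Strategy) (σ : Option α) (st : Fin A.kc × Fin A.kp)
    (h : List (Fin A.g)) (P : Fin A.kc × Fin A.kp → List (Fin A.g) → Prop) : Prop :=
  if A.isUniv st then
    match A.δU st σ with
    | Sum.inl s' => P s' h
    | Sum.inr fam =>
        (∀ γ : Fin A.g, P (fam (Sum.inl γ)) (h ++ [γ])) ∧
        (∀ δ' : Fin A.d, P (fam (Sum.inr δ')) h)
  else
    match A.δE st.1 with
    | Sum.inl c' => P (c', st.2) h
    | Sum.inr fam => P (fam (f (st.1, h)), st.2) (h ++ [f (st.1, h)])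

/-- All computation paths consistent with strategy `f`, starting from state `st` with
public-move history `h` and the given remaining tape (each tape symbol occurring twice, one
occurrence per transition), end in a state whose common component is `A.qa`. -/
def Acc (f : A.Strategy) : List (Option α) → Fin A.kc × Fin A.kp → List (Fin A.g) → Prop
  | [], st, _ => st.1 = A.qa
  | σ :: rest, st, h => A.Step f σ st h fun st' h' => Acc f rest st' h'

/-- The tape ¢ w ¢ with every tape symbol listed twice (two transitions per tape symbol);
`none` is the end-marker ¢. -/
def tape (w : List α) : List (Option α) :=
  (none :: (w.map some) ++ [none]).flatMap fun σ => [σ, σ]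

/-- `A` accepts `w` iff there is an existential strategy under which every consistent
computation path ends in a state with accepting common component. -/
def Accepts (w : List α) : Prop :=
  ∃ f : A.Strategy, A.Acc f (tape w) A.init []

/-- The language of `A`. -/
def lang : Set (List α) := { w | A.Accepts w }

end PAFA

namespace UPproof

/-- plain (non-branching) universal transition table:
common states: 0 ready(E), 1 p0, 2 p1, 3 p2, 4 wait, 5 qa, 6 dead.
private states: 0 start, 1 preS, 2 preA, 3 preN, 4 slow1, 5 slowR, 6 sU2, 7 sU3,
8 dU2A, 9 dU2B, 10 dU3, 11 expect, 12 aP, 13 aU, 14 bPre, 15 b0,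
16 b1p, 17 b1m, 18 b1e, 19 b2p, 20 b2m, 21 b2e, 22 b3p, 23 b3m, 24 b3e, 25 anch. -/
def dN : ℕ → ℕ → Bool → (Fin 7 × Fin 26)
  | 4, 1, _ => (0, 4)
  | 4, 2, _ => (0, 12)
  | 4, 3, _ => (0, 25)
  | 1, 4, true => (4, 6)
  | 2, 4, true => (4, 6)
  | 3, 4, true => (4, 8)
  | 1, 5, true => (4, 6)
  | 2, 5, true => (4, 6)
  | 3, 5, true => (4, 9)
  | 4, 6, true => (4, 7)
  | 4, 7, true => (0, 5)
  | 4, 8, true => (4, 10)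
  | 4, 8, false => (5, 0)
  | 4, 9, true => (4, 10)
  | 4, 10, true => (4, 11)
  | 4, 11, true => (6, 0)
  | 4, 11, false => (5, 0)
  | 1, 12, true => (4, 13)
  | 1, 12, false => (5, 0)
  | 2, 12, false => (5, 0)
  | 3, 12, _ => (5, 0)
  | 4, 13, true => (0, 12)
  | 4, 13, false => (5, 0)
  | 4, 14, true => (0, 15)
  | 1, 15, true => (4, 16)
  | 2, 15, true => (4, 17)
  | 3, 15, true => (4, 18)
  | 4, 16, true => (4, 19)
  | 4, 17, true => (4, 20)
  | 4, 18, true => (4, 21)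
  | 4, 19, true => (4, 22)
  | 4, 20, true => (4, 23)
  | 4, 21, true => (4, 24)
  | 4, 22, true => (0, 15)
  | 4, 23, true => (0, 5)
  | 4, 24, true => (4, 11)
  | 1, 25, _ => (6, 0)
  | 2, 25, _ => (5, 0)
  | 3, 25, _ => (5, 0)
  | _, _, _ => (6, 0)

def M : PAFA Unit where
  kc := 7
  kp := 26
  g := 3
  d := 4
  g_ge := by norm_num
  d_ge := by norm_num
  isUniv := fun s => s.1.val != 0
  δE := fun c => if c.val = 0 then Sum.inr (fun γ => (⟨γ.val + 1, by omega⟩ : Fin 7)) else Sum.inl c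
  δU := fun s σ =>
    if s.1.val = 5 ∨ s.1.val = 6 then Sum.inl s
    else if s.1.val = 4 ∧ s.2.val = 0 then
      Sum.inr (fun x => match x with
        | Sum.inl _ => ((5 : Fin 7), s.2)
        | Sum.inr d => ((4 : Fin 7),
            if d.val = 1 then (2 : Fin 26) else if d.val = 2 then (3 : Fin 26) else (1 : Fin 26)))
    else if s.1.val = 2 ∧ s.2.val = 12 ∧ σ.isSome then
      Sum.inr (fun x => match x with
        | Sum.inl _ => ((5 : Fin 7), s.2)
        | Sum.inr d => if d.val ≤ 1 then ((4 : Fin 7), (13 : Fin 26)) else ((4 : Fin 7), (14 : Fin 26)))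
    else Sum.inl (dN s.1.val s.2.val σ.isSome)
  pub_private := by
    intro s σ fam h
    split_ifs at h <;>
      first
        | (injection h with h'; subst h'; intro γ; rfl)
        | exact absurd h (by simp)
  init := ((4 : Fin 7), (0 : Fin 26))
  qa := (5 : Fin 7)

attribute [reducible] M

end UPproof
namespace UPproof

abbrev St := Fin 7 × Fin 26

def cOf (γ : Fin 3) : Fin 7 := ⟨γ.val + 1, by omega⟩

lemma acc_nil (f : M.Strategy) (st : St) (h) : M.Acc f [] st h ↔ st.1 = (5 : Fin 7) :=
  Iff.rfl

lemma acc_cons (f : M.Strategy) (σ l) (st : St) (h) :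
    M.Acc f (σ :: l) st h ↔ M.Step f σ st h (fun s h' => M.Acc f l s h') :=
  Iff.rfl

lemma step_inl {st : St} {σ : Option Unit} {s' : St}
    (hu : M.isUniv st = true) (hd : M.δU st σ = Sum.inl s')
    (f : M.Strategy) (h P) : M.Step f σ st h P ↔ P s' h := by
  unfold PAFA.Step
  rw [if_pos hu, hd]

lemma step_e (priv : Fin 26) (σ : Option Unit) (f : M.Strategy) (h P) :
    M.Step f σ ((0 : Fin 7), priv) h P ↔
      P (cOf (f ((0 : Fin 7), h)), priv) (h ++ [f ((0 : Fin 7), h)]) := by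
  unfold PAFA.Step
  rw [show M.isUniv ((0:Fin 7), priv) = false from rfl]
  simp only [Bool.false_eq_true, if_false]
  rfl

-- test reductions
example : M.δU ((1:Fin 7),(4:Fin 26)) (some ()) = Sum.inl ((4:Fin 7),(6:Fin 26)) := rfl
example : M.δU ((4:Fin 7),(11:Fin 26)) none = Sum.inl ((5:Fin 7),(0:Fin 26)) := rfl
example : M.isUniv ((3:Fin 7),(12:Fin 26)) = true := rfl

lemma qa_acc (f : M.Strategy) : ∀ (l : List (Option Unit)) (p : Fin 26) (h),
    M.Acc f l ((5 : Fin 7), p) h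
  | [], p, h => rfl
  | σ :: l, p, h => by
    rw [acc_cons, step_inl (show M.isUniv ((5:Fin 7), p) = true from rfl)
      (show M.δU ((5:Fin 7), p) σ = Sum.inl ((5:Fin 7), p) from rfl)]
    exact qa_acc f l p h

lemma dead_stuck (f : M.Strategy) : ∀ (l : List (Option Unit)) (p : Fin 26) (h),
    ¬ M.Acc f l ((6 : Fin 7), p) h
  | [], p, h => by
    intro hh
    rw [acc_nil] at hh
    exact absurd hh (by simp)
  | σ :: l, p, h => by
    rw [acc_cons, step_inl (show M.isUniv ((6:Fin 7), p) = true from rfl)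
      (show M.δU ((6:Fin 7), p) σ = Sum.inl ((6:Fin 7), p) from rfl)]
    exact dead_stuck f l p h

end UPproof
namespace UPproof

def modeOf (d : Fin 4) : Fin 26 :=
  if d.val = 1 then (2 : Fin 26) else if d.val = 2 then (3 : Fin 26) else (1 : Fin 26)

lemma step_start (σ : Option Unit) (f : M.Strategy) (h : List (Fin 3))
    (P : St → List (Fin 3) → Prop) :
    M.Step f σ ((4 : Fin 7), (0 : Fin 26)) h P ↔
      ((∀ γ : Fin 3, P ((5 : Fin 7), (0 : Fin 26)) (h ++ [γ])) ∧
       (∀ d : Fin 4, P ((4 : Fin 7), modeOf d) h)) :=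
  Iff.rfl

lemma step_trig (f : M.Strategy) (h : List (Fin 3)) (P : St → List (Fin 3) → Prop) :
    M.Step f (some ()) ((2 : Fin 7), (12 : Fin 26)) h P ↔
      ((∀ γ : Fin 3, P ((5 : Fin 7), (12 : Fin 26)) (h ++ [γ])) ∧
       (∀ d : Fin 4, P (if d.val ≤ 1 then ((4 : Fin 7), (13 : Fin 26)) else ((4 : Fin 7), (14 : Fin 26))) h)) :=
  Iff.rfl

lemma rep_flatMap (m : ℕ) :
    (List.replicate m (some ())).flatMap (fun σ => [σ, σ]) =
      List.replicate (2 * m) (some ()) := by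
  induction m with
  | zero => simp
  | succ k ih =>
    rw [List.replicate_succ, List.flatMap_cons, ih]
    rw [show 2 * (k + 1) = (2 * k) + 1 + 1 by ring]
    simp [List.replicate_succ]

lemma tape_eq (m : ℕ) :
    PAFA.tape (List.replicate m ()) =
      none :: none :: (List.replicate (2 * m) (some ()) ++ [none, none]) := by
  unfold PAFA.tape
  rw [List.map_replicate]
  rw [show (none :: List.replicate m (some ()) ++ [none] :
      List (Option Unit)) = [none] ++ List.replicate m (some ()) ++ [none] by simp]
  rw [List.flatMap_append, List.flatMap_append, rep_flatMap]
  simp [List.flatMap_cons]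

lemma fin3cases (x : Fin 3) : x = 0 ∨ x = 1 ∨ x = 2 := by
  rcases x with ⟨v, hv⟩
  interval_cases v <;> simp

end UPproof
namespace UPproof

open Classical in
/-- honest prover stream for input length `2^n`: `END` at position `2^(n-1)`,
marks at positions `2^k < 2^(n-1)`, `plain` elsewhere (0-indexed by `s`). -/
noncomputable def uu (n : ℕ) : ℕ → Fin 3 := fun s =>
  if s + 1 = 2 ^ (n - 1) then 2
  else if (∃ k, s + 1 = 2 ^ k) ∧ s + 1 < 2 ^ (n - 1) then 1 else 0

noncomputable def F (n : ℕ) : M.Strategy := fun q => uu n q.2.length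

lemma F_eval (n : ℕ) (h : List (Fin 3)) : F n ((0 : Fin 7), h) = uu n h.length := rfl

lemma uu_end (n : ℕ) {s : ℕ} (hs : s + 1 = 2 ^ (n - 1)) : uu n s = 2 := by
  unfold uu; rw [if_pos hs]

lemma uu_mark (n : ℕ) {s : ℕ} (hp : ∃ k, s + 1 = 2 ^ k) (hl : s + 1 < 2 ^ (n - 1)) :
    uu n s = 1 := by
  unfold uu; rw [if_neg (by omega), if_pos ⟨hp, hl⟩]

lemma uu_plain (n : ℕ) {s : ℕ} (hp : ¬ ∃ k, s + 1 = 2 ^ k) : uu n s = 0 := by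
  unfold uu
  rw [if_neg (fun hc => hp ⟨n - 1, hc⟩), if_neg (by tauto)]

lemma rep_peel (j : ℕ) (X : List (Option Unit)) :
    List.replicate (j + 1) (some ()) ++ X = some () :: (List.replicate j (some ()) ++ X) := by
  simp [List.replicate_succ]

/-- base / tail mode: from `(ready, slow1/slowR)` at symbol `p` with `p + t = e`,
remaining input of `4t+4` symbols is accepted. -/
lemma slow_complete (n : ℕ) : ∀ t p (priv : Fin 26), (priv = 4 ∨ priv = 5) → 1 ≤ p →
    p + t = 2 ^ (n - 1) → ∀ h : List (Fin 3), h.length = p - 1 →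
    M.Acc (F n) (List.replicate (4 * t + 4) (some ()) ++ [none, none]) ((0 : Fin 7), priv) h := by
  intro t
  induction t with
  | zero =>
    intro p priv hpriv hp he h hh
    have hu : uu n h.length = 2 := uu_end n (by omega)
    rw [show 4 * 0 + 4 = 3 + 1 by rfl, rep_peel, acc_cons, step_e, F_eval, hu,
      show cOf 2 = (3 : Fin 7) from rfl]
    rcases hpriv with hpriv | hpriv <;> subst hpriv
    · rw [rep_peel, acc_cons,
        step_inl (show M.isUniv ((3:Fin 7), (4:Fin 26)) = true from rfl)
          (show M.δU ((3:Fin 7), (4:Fin 26)) (some ()) = Sum.inl ((4:Fin 7),(8:Fin 26)) from rfl),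
        rep_peel, acc_cons,
        step_inl (show M.isUniv ((4:Fin 7), (8:Fin 26)) = true from rfl)
          (show M.δU ((4:Fin 7), (8:Fin 26)) (some ()) = Sum.inl ((4:Fin 7),(10:Fin 26)) from rfl),
        rep_peel, acc_cons,
        step_inl (show M.isUniv ((4:Fin 7), (10:Fin 26)) = true from rfl)
          (show M.δU ((4:Fin 7), (10:Fin 26)) (some ()) = Sum.inl ((4:Fin 7),(11:Fin 26)) from rfl)]
      simp only [List.replicate, List.nil_append]
      rw [acc_cons,
        step_inl (show M.isUniv ((4:Fin 7), (11:Fin 26)) = true from rfl)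
          (show M.δU ((4:Fin 7), (11:Fin 26)) none = Sum.inl ((5:Fin 7),(0:Fin 26)) from rfl)]
      exact qa_acc _ _ _ _
    · rw [rep_peel, acc_cons,
        step_inl (show M.isUniv ((3:Fin 7), (5:Fin 26)) = true from rfl)
          (show M.δU ((3:Fin 7), (5:Fin 26)) (some ()) = Sum.inl ((4:Fin 7),(9:Fin 26)) from rfl),
        rep_peel, acc_cons,
        step_inl (show M.isUniv ((4:Fin 7), (9:Fin 26)) = true from rfl)
          (show M.δU ((4:Fin 7), (9:Fin 26)) (some ()) = Sum.inl ((4:Fin 7),(10:Fin 26)) from rfl),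
        rep_peel, acc_cons,
        step_inl (show M.isUniv ((4:Fin 7), (10:Fin 26)) = true from rfl)
          (show M.δU ((4:Fin 7), (10:Fin 26)) (some ()) = Sum.inl ((4:Fin 7),(11:Fin 26)) from rfl)]
      simp only [List.replicate, List.nil_append]
      rw [acc_cons,
        step_inl (show M.isUniv ((4:Fin 7), (11:Fin 26)) = true from rfl)
          (show M.δU ((4:Fin 7), (11:Fin 26)) none = Sum.inl ((5:Fin 7),(0:Fin 26)) from rfl)]
      exact qa_acc _ _ _ _
  | succ k ih =>
    intro p priv hpriv hp he h hh
    have hne : uu n h.length ≠ 2 := by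
      intro hc
      unfold uu at hc
      split_ifs at hc with h1 h2
      · omega
      · exact absurd hc (by simp)
      · exact absurd hc (by simp)
    rw [show 4 * (k + 1) + 4 = ((4 * k + 4) + 1 + 1 + 1) + 1 by ring,
      rep_peel, acc_cons, step_e, F_eval]
    rcases fin3cases (uu n h.length) with hu | hu | hu
    rotate_right
    · exact absurd hu hne
    all_goals (
      rw [hu]
      rcases hpriv with hpriv | hpriv <;> subst hpriv <;>
        (first
          | rw [show cOf 0 = (1 : Fin 7) from rfl, rep_peel, acc_cons,
              step_inl (show M.isUniv ((1:Fin 7), (4:Fin 26)) = true from rfl)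
                (show M.δU ((1:Fin 7), (4:Fin 26)) (some ()) = Sum.inl ((4:Fin 7),(6:Fin 26)) from rfl)]
          | rw [show cOf 0 = (1 : Fin 7) from rfl, rep_peel, acc_cons,
              step_inl (show M.isUniv ((1:Fin 7), (5:Fin 26)) = true from rfl)
                (show M.δU ((1:Fin 7), (5:Fin 26)) (some ()) = Sum.inl ((4:Fin 7),(6:Fin 26)) from rfl)]
          | rw [show cOf 1 = (2 : Fin 7) from rfl, rep_peel, acc_cons,
              step_inl (show M.isUniv ((2:Fin 7), (4:Fin 26)) = true from rfl)
                (show M.δU ((2:Fin 7), (4:Fin 26)) (some ()) = Sum.inl ((4:Fin 7),(6:Fin 26)) from rfl)]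
          | rw [show cOf 1 = (2 : Fin 7) from rfl, rep_peel, acc_cons,
              step_inl (show M.isUniv ((2:Fin 7), (5:Fin 26)) = true from rfl)
                (show M.δU ((2:Fin 7), (5:Fin 26)) (some ()) = Sum.inl ((4:Fin 7),(6:Fin 26)) from rfl)]) <;>
      rw [rep_peel, acc_cons,
          step_inl (show M.isUniv ((4:Fin 7), (6:Fin 26)) = true from rfl)
            (show M.δU ((4:Fin 7), (6:Fin 26)) (some ()) = Sum.inl ((4:Fin 7),(7:Fin 26)) from rfl),
          rep_peel, acc_cons,
          step_inl (show M.isUniv ((4:Fin 7), (7:Fin 26)) = true from rfl)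
            (show M.δU ((4:Fin 7), (7:Fin 26)) (some ()) = Sum.inl ((0:Fin 7),(5:Fin 26)) from rfl)] <;>
      exact ih (p + 1) 5 (Or.inr rfl) (by omega) (by omega) _ (by simp [hh]; omega))
  
end UPproof
namespace UPproof

lemma austep (f : M.Strategy) (σ : Option Unit) (l : List (Option Unit)) (h : List (Fin 3))
    (c : Fin 7) (p : Fin 26) (c' : Fin 7) (p' : Fin 26)
    (hu : M.isUniv (c, p) = true := by rfl)
    (hd : M.δU (c, p) σ = Sum.inl (c', p') := by rfl) :
    M.Acc f (σ :: l) (c, p) h ↔ M.Acc f l (c', p') h := by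
  rw [acc_cons, step_inl hu hd]

lemma pow_between {k p : ℕ} (h1 : 2 ^ k < p) (h2 : p < 2 ^ (k + 1)) : ¬ ∃ j, p = 2 ^ j := by
  rintro ⟨j, rfl⟩
  rcases lt_or_ge j (k + 1) with hj | hj
  · have : (2:ℕ) ^ j ≤ 2 ^ k := Nat.pow_le_pow_right (by norm_num) (by omega)
    omega
  · have : (2:ℕ) ^ (k + 1) ≤ 2 ^ j := Nat.pow_le_pow_right (by norm_num) hj
    omega

/-- b-mode: entered at symbol `p = q+1` after trigger at mark `q = 2^k`, where `2q + s = e`. -/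
lemma b_complete (n : ℕ) {k : ℕ} (q : ℕ) (hq : q = 2 ^ k) :
    ∀ r p s, q < p → p + r = 2 * q → 2 * q + s = 2 ^ (n - 1) →
    ∀ h : List (Fin 3), h.length = p - 1 →
    M.Acc (F n) (List.replicate (4 * s + 5 * r + 5) (some ()) ++ [none, none])
      ((0 : Fin 7), (15 : Fin 26)) h := by
  intro r
  induction r with
  | zero =>
    intro p s hqp hp2 hse h hh
    have hp : p = 2 * q := by omega
    rcases Nat.eq_zero_or_pos s with hs | hs
    · -- 2q = e : the end marker is met inside b-mode
      have hu : uu n h.length = 2 := uu_end n (by omega)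
      rw [show 4 * s + 5 * 0 + 5 = 4 + 1 by omega, rep_peel, acc_cons, step_e, F_eval, hu,
        show cOf 2 = (3 : Fin 7) from rfl,
        show (4:ℕ) = 3 + 1 by rfl, rep_peel, austep _ (some ()) _ _ 3 15 4 18,
        rep_peel, austep _ (some ()) _ _ 4 18 4 21,
        rep_peel, austep _ (some ()) _ _ 4 21 4 24]
      simp only [List.replicate, List.nil_append, List.singleton_append, List.cons_append]
      rw [austep _ (some ()) _ _ 4 24 4 11, austep _ none _ _ 4 11 5 0]
      exact qa_acc _ _ _ _
    · -- 2q < e : a mark is met, switch to the slow tail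
      have hu : uu n h.length = 1 := by
        apply uu_mark n ⟨k + 1, by omega⟩
        omega
      rw [show 4 * s + 5 * 0 + 5 = (4 * s + 1 + 1 + 1 + 1) + 1 by ring,
        rep_peel, acc_cons, step_e, F_eval, hu, show cOf 1 = (2 : Fin 7) from rfl,
        rep_peel, austep _ (some ()) _ _ 2 15 4 17,
        rep_peel, austep _ (some ()) _ _ 4 17 4 20,
        rep_peel, austep _ (some ()) _ _ 4 20 4 23,
        rep_peel, austep _ (some ()) _ _ 4 23 0 5]
      rw [show 4 * s = 4 * (s - 1) + 4 by omega]
      exact slow_complete n (s - 1) (2 * q + 1) 5 (Or.inr rfl) (by omega) (by omega) _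
        (by simp [hh]; omega)
  | succ r ih =>
    intro p s hqp hp2 hse h hh
    have hu : uu n h.length = 0 := by
      apply uu_plain
      have : h.length + 1 = p := by omega
      rw [this]
      exact pow_between (k := k) (by omega) (by rw [pow_succ]; omega)
    rw [show 4 * s + 5 * (r + 1) + 5 = ((4 * s + 5 * r + 5) + 1 + 1 + 1 + 1) + 1 by ring,
      rep_peel, acc_cons, step_e, F_eval, hu, show cOf 0 = (1 : Fin 7) from rfl,
      rep_peel, austep _ (some ()) _ _ 1 15 4 16,
      rep_peel, austep _ (some ()) _ _ 4 16 4 19,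
      rep_peel, austep _ (some ()) _ _ 4 19 4 22,
      rep_peel, austep _ (some ()) _ _ 4 22 0 15]
    exact ih (p + 1) s (by omega) (by omega) hse _ (by simp [hh]; omega)

/-- a-mode (pre-trigger): at symbol `p` with `p + t = e`. -/
lemma a_complete (n : ℕ) : ∀ t p, 1 ≤ p → p + t = 2 ^ (n - 1) →
    ∀ h : List (Fin 3), h.length = p - 1 →
    M.Acc (F n) (List.replicate (2 ^ (n - 1) + 3 * t + 3) (some ()) ++ [none, none])
      ((0 : Fin 7), (12 : Fin 26)) h := by
  intro t
  induction t with
  | zero =>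
    intro p hp he h hh
    have hu : uu n h.length = 2 := uu_end n (by omega)
    rw [show 2 ^ (n - 1) + 3 * 0 + 3 = (2 ^ (n - 1) + 1 + 1) + 1 by ring,
      rep_peel, acc_cons, step_e, F_eval, hu, show cOf 2 = (3 : Fin 7) from rfl,
      rep_peel, austep _ (some ()) _ _ 3 12 5 0]
    exact qa_acc _ _ _ _
  | succ t ih =>
    intro p hp he h hh
    have hne : p < 2 ^ (n - 1) := by omega
    rw [show 2 ^ (n - 1) + 3 * (t + 1) + 3 = ((2 ^ (n - 1) + 3 * t + 3) + 1 + 1) + 1 by ring,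
      rep_peel, acc_cons, step_e, F_eval]
    rcases fin3cases (uu n h.length) with hu | hu | hu
    rotate_right
    · exfalso
      unfold uu at hu
      split_ifs at hu with h1 h2
      · omega
      · exact absurd hu (by simp)
      · exact absurd hu (by simp)
    · -- plain symbol
      rw [hu, show cOf 0 = (1 : Fin 7) from rfl,
        rep_peel, austep _ (some ()) _ _ 1 12 4 13,
        rep_peel, austep _ (some ()) _ _ 4 13 0 12]
      exact ih (p + 1) (by omega) (by omega) _ (by simp [hh]; omega)
    · -- mark: universal may continue or trigger
      rw [hu, show cOf 1 = (2 : Fin 7) from rfl, rep_peel, acc_cons, step_trig]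
      constructor
      · intro γ; exact qa_acc _ _ _ _
      · intro d
        rcases Nat.lt_or_ge d.val 2 with hd | hd
        · rw [if_pos (by omega)]
          rw [rep_peel, austep _ (some ()) _ _ 4 13 0 12]
          exact ih (p + 1) (by omega) (by omega) _ (by simp [hh]; omega)
        · rw [if_neg (by omega)]
          rw [rep_peel, austep _ (some ()) _ _ 4 14 0 15]
          -- enter b-mode with q := p
          have hmark : uu n h.length = 1 := hu
          have hpow : ∃ k, p = 2 ^ k := by
            have := hmark
            unfold uu at this
            split_ifs at this with h1 h2
            · exact absurd this (by simp)
            · obtain ⟨⟨k, hk⟩, _⟩ := h2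
              exact ⟨k, by omega⟩
            · exact absurd this (by simp)
          obtain ⟨k, hk⟩ := hpow
          -- 2p ≤ e since p = 2^k < e = 2^(n-1)
          have hple : 2 * p ≤ 2 ^ (n - 1) := by
            have h1 : 2 ^ k < 2 ^ (n - 1) := by omega
            have h2 : k < n - 1 := by
              by_contra hc
              have : (2:ℕ) ^ (n - 1) ≤ 2 ^ k := Nat.pow_le_pow_right (by norm_num) (by omega)
              omega
            have h3 : (2:ℕ) ^ (k + 1) ≤ 2 ^ (n - 1) := Nat.pow_le_pow_right (by norm_num) (by omega)
            rw [pow_succ] at h3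
            omega
          rw [show 2 ^ (n - 1) + 3 * t + 3 = 4 * (2 ^ (n - 1) - 2 * p) + 5 * (p - 1) + 5 by omega]
          exact b_complete n p hk (p - 1) (p + 1) (2 ^ (n - 1) - 2 * p) (by omega) (by omega)
            (by omega) _ (by simp [hh]; omega)

end UPproof
namespace UPproof

lemma complete_zero : M.Accepts (List.replicate (2 ^ 0) ()) := by
  refine ⟨F 0, ?_⟩
  rw [show (2:ℕ) ^ 0 = 1 from rfl, tape_eq, show M.init = ((4:Fin 7),(0:Fin 26)) from rfl]
  rw [acc_cons, step_start]
  constructor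
  · intro γ; exact qa_acc _ _ _ _
  · intro d
    have hu : uu 0 0 = 2 := uu_end 0 (by norm_num)
    have hrep : List.replicate (2 * 1) (some ()) ++ [none, none] =
        some () :: some () :: [none, none] := by
      simp [List.replicate]
    fin_cases d <;>
      simp only [modeOf] <;> norm_num <;> rw [hrep]
    · rw [austep _ none _ _ 4 1 0 4, acc_cons, step_e, F_eval,
        show ([] : List (Fin 3)).length = 0 from rfl, hu, show cOf 2 = (3:Fin 7) from rfl,
        austep _ (some ()) _ _ 3 4 4 8, austep _ none _ _ 4 8 5 0]
      exact qa_acc _ _ _ _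
    · rw [austep _ none _ _ 4 2 0 12, acc_cons, step_e, F_eval,
        show ([] : List (Fin 3)).length = 0 from rfl, hu, show cOf 2 = (3:Fin 7) from rfl,
        austep _ (some ()) _ _ 3 12 5 0]
      exact qa_acc _ _ _ _
    · rw [austep _ none _ _ 4 3 0 25, acc_cons, step_e, F_eval,
        show ([] : List (Fin 3)).length = 0 from rfl, hu, show cOf 2 = (3:Fin 7) from rfl,
        austep _ (some ()) _ _ 3 25 5 0]
      exact qa_acc _ _ _ _
    · rw [austep _ none _ _ 4 1 0 4, acc_cons, step_e, F_eval,
        show ([] : List (Fin 3)).length = 0 from rfl, hu, show cOf 2 = (3:Fin 7) from rfl,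
        austep _ (some ()) _ _ 3 4 4 8, austep _ none _ _ 4 8 5 0]
      exact qa_acc _ _ _ _

lemma complete_pos (n : ℕ) (hn : 1 ≤ n) : M.Accepts (List.replicate (2 ^ n) ()) := by
  refine ⟨F n, ?_⟩
  have he1 : 1 ≤ 2 ^ (n - 1) := Nat.one_le_two_pow
  have h2n : 2 ^ n = 2 * 2 ^ (n - 1) := by
    conv_lhs => rw [show n = (n - 1) + 1 by omega]
    rw [pow_succ]; ring
  rw [tape_eq, show M.init = ((4:Fin 7),(0:Fin 26)) from rfl, acc_cons, step_start]
  constructor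
  · intro γ; exact qa_acc _ _ _ _
  · intro d
    fin_cases d <;> simp only [modeOf] <;> norm_num
    · -- base branch
      rw [austep _ none _ _ 4 1 0 4,
        show 2 * 2 ^ n = 4 * (2 ^ (n - 1) - 1) + 4 by omega]
      exact slow_complete n (2 ^ (n - 1) - 1) 1 4 (Or.inl rfl) le_rfl (by omega) [] rfl
    · -- a branch
      rw [austep _ none _ _ 4 2 0 12,
        show 2 * 2 ^ n = 2 ^ (n - 1) + 3 * (2 ^ (n - 1) - 1) + 3 by omega]
      exact a_complete n (2 ^ (n - 1) - 1) 1 le_rfl (by omega) [] rfl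
    · -- anchor branch
      rw [austep _ none _ _ 4 3 0 25,
        show 2 * 2 ^ n = ((2 * 2 ^ n - 2) + 1) + 1 by omega, rep_peel,
        acc_cons, step_e, F_eval, show ([] : List (Fin 3)).length = 0 from rfl]
      rcases eq_or_lt_of_le he1 with he | he
      · rw [uu_end n (by omega), show cOf 2 = (3:Fin 7) from rfl, rep_peel,
          austep _ (some ()) _ _ 3 25 5 0]
        exact qa_acc _ _ _ _
      · rw [uu_mark n ⟨0, rfl⟩ (by omega), show cOf 1 = (2:Fin 7) from rfl, rep_peel,
          austep _ (some ()) _ _ 2 25 5 0]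
        exact qa_acc _ _ _ _
    · -- base branch (second private symbol)
      rw [austep _ none _ _ 4 1 0 4,
        show 2 * 2 ^ n = 4 * (2 ^ (n - 1) - 1) + 4 by omega]
      exact slow_complete n (2 ^ (n - 1) - 1) 1 4 (Or.inl rfl) le_rfl (by omega) [] rfl

lemma complete (n : ℕ) : M.Accepts (List.replicate (2 ^ n) ()) := by
  rcases Nat.eq_zero_or_pos n with hn | hn
  · subst hn; exact complete_zero
  · exact complete_pos n hn

end UPproof
namespace UPproof

variable (f : M.Strategy)

/-- canonical history after `j` prover moves -/
def hsl (f : M.Strategy) : ℕ → List (Fin 3)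
  | 0 => []
  | j + 1 => hsl f j ++ ([f ((0 : Fin 7), hsl f j)] : List (Fin 3))

/-- the stream extracted from a strategy -/
def us (j : ℕ) : Fin 3 := f ((0 : Fin 7), hsl f j)

lemma hsl_succ (j : ℕ) : hsl f (j + 1) = hsl f j ++ [us f j] := rfl

lemma hsl_len (f : M.Strategy) : ∀ j, (hsl f j).length = j := by
  intro j
  induction j with
  | zero => rfl
  | succ k ih => rw [hsl_succ]; simp [ih]

lemma acc_e_at {σ : Option Unit} {l : List (Option Unit)} {priv : Fin 26} {c : ℕ}
    (H : M.Acc f (σ :: l) ((0 : Fin 7), priv) (hsl f c)) :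
    M.Acc f l (cOf (us f c), priv) (hsl f (c + 1)) := by
  rw [acc_cons, step_e] at H
  exact H


/-- slow (base/tail) mode soundness: from `(ready, slowR)`. -/
lemma slowR_sound : ∀ j c,
    M.Acc f (List.replicate j (some ()) ++ [none, none]) ((0 : Fin 7), (5 : Fin 26)) (hsl f c) →
    ∃ t, 1 ≤ t ∧ j = 4 * t ∧ us f (c + t - 1) = 2 ∧ ∀ s, s < t - 1 → us f (c + s) ≠ 2 := by
  intro j
  induction j using Nat.strong_induction_on with
  | _ j ih =>
    intro c H
    match j with
    | 0 =>
      exfalso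
      simp only [List.replicate, List.nil_append] at H
      replace H := acc_e_at f H
      rcases fin3cases (us f c) with hu | hu | hu <;> rw [hu] at H
      · rw [show cOf 0 = (1:Fin 7) from rfl, austep _ none _ _ 1 5 6 0] at H
        exact dead_stuck f _ _ _ H
      · rw [show cOf 1 = (2:Fin 7) from rfl, austep _ none _ _ 2 5 6 0] at H
        exact dead_stuck f _ _ _ H
      · rw [show cOf 2 = (3:Fin 7) from rfl, austep _ none _ _ 3 5 6 0] at H
        exact dead_stuck f _ _ _ H
    | 1 =>
      exfalso
      rw [rep_peel] at H
      replace H := acc_e_at f H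
      simp only [List.replicate, List.nil_append] at H
      rcases fin3cases (us f c) with hu | hu | hu <;> rw [hu] at H
      · rw [show cOf 0 = (1:Fin 7) from rfl, austep _ none _ _ 1 5 6 0] at H
        exact dead_stuck f _ _ _ H
      · rw [show cOf 1 = (2:Fin 7) from rfl, austep _ none _ _ 2 5 6 0] at H
        exact dead_stuck f _ _ _ H
      · rw [show cOf 2 = (3:Fin 7) from rfl, austep _ none _ _ 3 5 6 0] at H
        exact dead_stuck f _ _ _ H
    | 2 =>
      exfalso
      rw [show (2:ℕ) = 1 + 1 from rfl, rep_peel] at H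
      replace H := acc_e_at f H
      rw [rep_peel] at H
      simp only [List.replicate, List.nil_append] at H
      rcases fin3cases (us f c) with hu | hu | hu <;> rw [hu] at H
      · rw [show cOf 0 = (1:Fin 7) from rfl, austep _ (some ()) _ _ 1 5 4 6,
          austep _ none _ _ 4 6 6 0] at H
        exact dead_stuck f _ _ _ H
      · rw [show cOf 1 = (2:Fin 7) from rfl, austep _ (some ()) _ _ 2 5 4 6,
          austep _ none _ _ 4 6 6 0] at H
        exact dead_stuck f _ _ _ H
      · rw [show cOf 2 = (3:Fin 7) from rfl, austep _ (some ()) _ _ 3 5 4 9,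
          austep _ none _ _ 4 9 6 0] at H
        exact dead_stuck f _ _ _ H
    | 3 =>
      exfalso
      rw [show (3:ℕ) = (1 + 1) + 1 from rfl, rep_peel] at H
      replace H := acc_e_at f H
      rw [rep_peel] at H
      rw [rep_peel] at H
      simp only [List.replicate, List.nil_append] at H
      rcases fin3cases (us f c) with hu | hu | hu <;> rw [hu] at H
      · rw [show cOf 0 = (1:Fin 7) from rfl, austep _ (some ()) _ _ 1 5 4 6,
          austep _ (some ()) _ _ 4 6 4 7, austep _ none _ _ 4 7 6 0] at H
        exact dead_stuck f _ _ _ H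
      · rw [show cOf 1 = (2:Fin 7) from rfl, austep _ (some ()) _ _ 2 5 4 6,
          austep _ (some ()) _ _ 4 6 4 7, austep _ none _ _ 4 7 6 0] at H
        exact dead_stuck f _ _ _ H
      · rw [show cOf 2 = (3:Fin 7) from rfl, austep _ (some ()) _ _ 3 5 4 9,
          austep _ (some ()) _ _ 4 9 4 10, austep _ none _ _ 4 10 6 0] at H
        exact dead_stuck f _ _ _ H
    | (r + 4) =>
      rw [show r + 4 = (((r + 1) + 1) + 1) + 1 by ring, rep_peel] at H
      replace H := acc_e_at f H
      rw [rep_peel] at H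
      rcases fin3cases (us f c) with hu | hu | hu <;> rw [hu] at H
      · rw [show cOf 0 = (1:Fin 7) from rfl, austep _ (some ()) _ _ 1 5 4 6, rep_peel,
          austep _ (some ()) _ _ 4 6 4 7, rep_peel, austep _ (some ()) _ _ 4 7 0 5] at H
        obtain ⟨t, ht1, ht2, ht3, ht4⟩ := ih r (by omega) (c + 1) H
        refine ⟨t + 1, by omega, by omega, ?_, ?_⟩
        · rw [show c + (t + 1) - 1 = c + 1 + t - 1 by omega]; exact ht3
        · intro s hs
          rcases Nat.eq_zero_or_pos s with hs0 | hs0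
          · subst hs0; rw [Nat.add_zero, hu]; simp
          · rw [show c + s = c + 1 + (s - 1) by omega]
            exact ht4 (s - 1) (by omega)
      · rw [show cOf 1 = (2:Fin 7) from rfl, austep _ (some ()) _ _ 2 5 4 6, rep_peel,
          austep _ (some ()) _ _ 4 6 4 7, rep_peel, austep _ (some ()) _ _ 4 7 0 5] at H
        obtain ⟨t, ht1, ht2, ht3, ht4⟩ := ih r (by omega) (c + 1) H
        refine ⟨t + 1, by omega, by omega, ?_, ?_⟩
        · rw [show c + (t + 1) - 1 = c + 1 + t - 1 by omega]; exact ht3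
        · intro s hs
          rcases Nat.eq_zero_or_pos s with hs0 | hs0
          · subst hs0; rw [Nat.add_zero, hu]; simp
          · rw [show c + s = c + 1 + (s - 1) by omega]
            exact ht4 (s - 1) (by omega)
      · -- END symbol: j must be exactly 4
        rw [show cOf 2 = (3:Fin 7) from rfl, austep _ (some ()) _ _ 3 5 4 9, rep_peel,
          austep _ (some ()) _ _ 4 9 4 10, rep_peel, austep _ (some ()) _ _ 4 10 4 11] at H
        match r with
        | 0 =>
          refine ⟨1, le_rfl, by omega, by simpa using hu, by omega⟩
        | r' + 1 =>
          exfalso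
          rw [rep_peel, austep _ (some ()) _ _ 4 11 6 0] at H
          exact dead_stuck f _ _ _ H
  
end UPproof
namespace UPproof

variable (f : M.Strategy)

/-- b-mode soundness: from `(ready, b0)` the stream shows plains, then a mark or END,
with exact step-accounting. -/
lemma b_sound : ∀ j c,
    M.Acc f (List.replicate j (some ()) ++ [none, none]) ((0 : Fin 7), (15 : Fin 26)) (hsl f c) →
    ∃ t, 1 ≤ t ∧ (∀ s, s < t - 1 → us f (c + s) = 0) ∧
      ((us f (c + t - 1) = 2 ∧ j = 5 * t) ∨
       (us f (c + t - 1) = 1 ∧ ∃ t₂, 1 ≤ t₂ ∧ j = 5 * t + 4 * t₂ ∧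
          us f (c + t + t₂ - 1) = 2 ∧ ∀ s, s < t₂ - 1 → us f (c + t + s) ≠ 2)) := by
  intro j
  induction j using Nat.strong_induction_on with
  | _ j ih =>
    intro c H
    match j with
    | 0 =>
      exfalso
      simp only [List.replicate, List.nil_append] at H
      replace H := acc_e_at f H
      rcases fin3cases (us f c) with hu | hu | hu <;> rw [hu] at H
      · rw [show cOf 0 = (1:Fin 7) from rfl, austep _ none _ _ 1 15 6 0] at H
        exact dead_stuck f _ _ _ H
      · rw [show cOf 1 = (2:Fin 7) from rfl, austep _ none _ _ 2 15 6 0] at H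
        exact dead_stuck f _ _ _ H
      · rw [show cOf 2 = (3:Fin 7) from rfl, austep _ none _ _ 3 15 6 0] at H
        exact dead_stuck f _ _ _ H
    | 1 =>
      exfalso
      rw [rep_peel] at H
      replace H := acc_e_at f H
      simp only [List.replicate, List.nil_append] at H
      rcases fin3cases (us f c) with hu | hu | hu <;> rw [hu] at H
      · rw [show cOf 0 = (1:Fin 7) from rfl, austep _ none _ _ 1 15 6 0] at H
        exact dead_stuck f _ _ _ H
      · rw [show cOf 1 = (2:Fin 7) from rfl, austep _ none _ _ 2 15 6 0] at H
        exact dead_stuck f _ _ _ H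
      · rw [show cOf 2 = (3:Fin 7) from rfl, austep _ none _ _ 3 15 6 0] at H
        exact dead_stuck f _ _ _ H
    | 2 =>
      exfalso
      rw [show (2:ℕ) = 1 + 1 from rfl, rep_peel] at H
      replace H := acc_e_at f H
      rw [rep_peel] at H
      simp only [List.replicate, List.nil_append] at H
      rcases fin3cases (us f c) with hu | hu | hu <;> rw [hu] at H
      · rw [show cOf 0 = (1:Fin 7) from rfl, austep _ (some ()) _ _ 1 15 4 16,
          austep _ none _ _ 4 16 6 0] at H
        exact dead_stuck f _ _ _ H
      · rw [show cOf 1 = (2:Fin 7) from rfl, austep _ (some ()) _ _ 2 15 4 17,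
          austep _ none _ _ 4 17 6 0] at H
        exact dead_stuck f _ _ _ H
      · rw [show cOf 2 = (3:Fin 7) from rfl, austep _ (some ()) _ _ 3 15 4 18,
          austep _ none _ _ 4 18 6 0] at H
        exact dead_stuck f _ _ _ H
    | 3 =>
      exfalso
      rw [show (3:ℕ) = (1 + 1) + 1 from rfl, rep_peel] at H
      replace H := acc_e_at f H
      rw [rep_peel, rep_peel] at H
      simp only [List.replicate, List.nil_append] at H
      rcases fin3cases (us f c) with hu | hu | hu <;> rw [hu] at H
      · rw [show cOf 0 = (1:Fin 7) from rfl, austep _ (some ()) _ _ 1 15 4 16,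
          austep _ (some ()) _ _ 4 16 4 19, austep _ none _ _ 4 19 6 0] at H
        exact dead_stuck f _ _ _ H
      · rw [show cOf 1 = (2:Fin 7) from rfl, austep _ (some ()) _ _ 2 15 4 17,
          austep _ (some ()) _ _ 4 17 4 20, austep _ none _ _ 4 20 6 0] at H
        exact dead_stuck f _ _ _ H
      · rw [show cOf 2 = (3:Fin 7) from rfl, austep _ (some ()) _ _ 3 15 4 18,
          austep _ (some ()) _ _ 4 18 4 21, austep _ none _ _ 4 21 6 0] at H
        exact dead_stuck f _ _ _ H
    | 4 =>
      exfalso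
      rw [show (4:ℕ) = ((1 + 1) + 1) + 1 from rfl, rep_peel] at H
      replace H := acc_e_at f H
      rw [rep_peel, rep_peel, rep_peel] at H
      simp only [List.replicate, List.nil_append] at H
      rcases fin3cases (us f c) with hu | hu | hu <;> rw [hu] at H
      · rw [show cOf 0 = (1:Fin 7) from rfl, austep _ (some ()) _ _ 1 15 4 16,
          austep _ (some ()) _ _ 4 16 4 19, austep _ (some ()) _ _ 4 19 4 22,
          austep _ none _ _ 4 22 6 0] at H
        exact dead_stuck f _ _ _ H
      · rw [show cOf 1 = (2:Fin 7) from rfl, austep _ (some ()) _ _ 2 15 4 17,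
          austep _ (some ()) _ _ 4 17 4 20, austep _ (some ()) _ _ 4 20 4 23,
          austep _ none _ _ 4 23 6 0] at H
        exact dead_stuck f _ _ _ H
      · rw [show cOf 2 = (3:Fin 7) from rfl, austep _ (some ()) _ _ 3 15 4 18,
          austep _ (some ()) _ _ 4 18 4 21, austep _ (some ()) _ _ 4 21 4 24,
          austep _ none _ _ 4 24 6 0] at H
        exact dead_stuck f _ _ _ H
    | (r + 5) =>
      rw [show r + 5 = ((((r + 1) + 1) + 1) + 1) + 1 by ring, rep_peel] at H
      replace H := acc_e_at f H
      rw [rep_peel] at H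
      rcases fin3cases (us f c) with hu | hu | hu <;> rw [hu] at H
      · -- plain, continue in b
        rw [show cOf 0 = (1:Fin 7) from rfl, austep _ (some ()) _ _ 1 15 4 16, rep_peel,
          austep _ (some ()) _ _ 4 16 4 19, rep_peel, austep _ (some ()) _ _ 4 19 4 22,
          rep_peel, austep _ (some ()) _ _ 4 22 0 15] at H
        obtain ⟨t, ht1, ht2, ht3⟩ := ih r (by omega) (c + 1) H
        refine ⟨t + 1, by omega, ?_, ?_⟩
        · intro s hs
          rcases Nat.eq_zero_or_pos s with hs0 | hs0
          · subst hs0; rw [Nat.add_zero]; exact hu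
          · rw [show c + s = c + 1 + (s - 1) by omega]
            exact ht2 (s - 1) (by omega)
        · rw [show c + (t + 1) - 1 = c + 1 + t - 1 by omega,
            show c + (t + 1) = c + 1 + t by omega]
          rcases ht3 with ⟨h1, h2⟩ | ⟨h1, t₂, h2, h3, h4, h5⟩
          · exact Or.inl ⟨h1, by omega⟩
          · exact Or.inr ⟨h1, t₂, h2, by omega, h4, h5⟩
      · -- mark: switch to slow tail
        rw [show cOf 1 = (2:Fin 7) from rfl, austep _ (some ()) _ _ 2 15 4 17, rep_peel,
          austep _ (some ()) _ _ 4 17 4 20, rep_peel, austep _ (some ()) _ _ 4 20 4 23,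
          rep_peel, austep _ (some ()) _ _ 4 23 0 5] at H
        obtain ⟨t₂, h1, h2, h3, h4⟩ := slowR_sound f r (c + 1) H
        refine ⟨1, le_rfl, by omega, Or.inr ⟨by simpa using hu, t₂, h1, by omega, ?_, ?_⟩⟩
        · rw [show c + 1 + t₂ - 1 = c + 1 + (t₂ - 1) by omega] at h3 ⊢
          exact h3
        · intro s hs
          rw [show c + 1 + s = c + 1 + s by rfl]
          exact h4 s hs
      · -- END inside b-mode
        rw [show cOf 2 = (3:Fin 7) from rfl, austep _ (some ()) _ _ 3 15 4 18, rep_peel,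
          austep _ (some ()) _ _ 4 18 4 21, rep_peel, austep _ (some ()) _ _ 4 21 4 24,
          rep_peel, austep _ (some ()) _ _ 4 24 4 11] at H
        match r with
        | 0 =>
          exact ⟨1, le_rfl, by omega, Or.inl ⟨by simpa using hu, by omega⟩⟩
        | r' + 1 =>
          exfalso
          rw [rep_peel, austep _ (some ()) _ _ 4 11 6 0] at H
          exact dead_stuck f _ _ _ H

end UPproof
namespace UPproof

variable (f : M.Strategy)

/-- base branch soundness: from `(ready, slow1)`. -/
lemma slow1_sound (j c : ℕ)
    (H : M.Acc f (List.replicate j (some ()) ++ [none, none]) ((0 : Fin 7), (4 : Fin 26))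
      (hsl f c)) :
    (us f c = 2 ∧ (j = 2 ∨ j = 4)) ∨
    (us f c ≠ 2 ∧ ∃ t, 2 ≤ t ∧ j = 4 * t ∧ us f (c + t - 1) = 2 ∧
      ∀ s, s < t - 1 → us f (c + s) ≠ 2) := by
  rcases fin3cases (us f c) with hu | hu | hu
  rotate_right
  · -- END at the very first symbol
    left
    refine ⟨hu, ?_⟩
    match j with
    | 0 =>
      exfalso
      simp only [List.replicate, List.nil_append] at H
      replace H := acc_e_at f H
      rw [hu, show cOf 2 = (3:Fin 7) from rfl, austep _ none _ _ 3 4 6 0] at H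
      exact dead_stuck f _ _ _ H
    | 1 =>
      exfalso
      rw [rep_peel] at H
      replace H := acc_e_at f H
      simp only [List.replicate, List.nil_append] at H
      rw [hu, show cOf 2 = (3:Fin 7) from rfl, austep _ none _ _ 3 4 6 0] at H
      exact dead_stuck f _ _ _ H
    | 2 => omega
    | 3 =>
      exfalso
      rw [show (3:ℕ) = (1 + 1) + 1 from rfl, rep_peel] at H
      replace H := acc_e_at f H
      rw [rep_peel, rep_peel] at H
      simp only [List.replicate, List.nil_append] at H
      rw [hu, show cOf 2 = (3:Fin 7) from rfl, austep _ (some ()) _ _ 3 4 4 8,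
        austep _ (some ()) _ _ 4 8 4 10, austep _ none _ _ 4 10 6 0] at H
      exact dead_stuck f _ _ _ H
    | 4 => omega
    | (r + 5) =>
      exfalso
      rw [show r + 5 = ((((r + 1) + 1) + 1) + 1) + 1 by ring, rep_peel] at H
      replace H := acc_e_at f H
      rw [rep_peel] at H
      rw [hu, show cOf 2 = (3:Fin 7) from rfl, austep _ (some ()) _ _ 3 4 4 8, rep_peel,
        austep _ (some ()) _ _ 4 8 4 10, rep_peel, austep _ (some ()) _ _ 4 10 4 11,
        rep_peel, austep _ (some ()) _ _ 4 11 6 0] at H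
      exact dead_stuck f _ _ _ H
  -- non-END first symbol: one slow cycle then slowR
  all_goals (
    right
    refine ⟨by rw [hu]; simp, ?_⟩
    match j with
    | 0 => ?_
    | 1 => ?_
    | 2 => ?_
    | 3 => ?_
    | (r + 4) => ?_)
  -- us = 0 cases
  · exfalso
    simp only [List.replicate, List.nil_append] at H
    replace H := acc_e_at f H
    rw [hu, show cOf 0 = (1:Fin 7) from rfl, austep _ none _ _ 1 4 6 0] at H
    exact dead_stuck f _ _ _ H
  · exfalso
    rw [rep_peel] at H
    replace H := acc_e_at f H
    simp only [List.replicate, List.nil_append] at H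
    rw [hu, show cOf 0 = (1:Fin 7) from rfl, austep _ none _ _ 1 4 6 0] at H
    exact dead_stuck f _ _ _ H
  · exfalso
    rw [show (2:ℕ) = 1 + 1 from rfl, rep_peel] at H
    replace H := acc_e_at f H
    rw [rep_peel] at H
    simp only [List.replicate, List.nil_append] at H
    rw [hu, show cOf 0 = (1:Fin 7) from rfl, austep _ (some ()) _ _ 1 4 4 6,
      austep _ none _ _ 4 6 6 0] at H
    exact dead_stuck f _ _ _ H
  · exfalso
    rw [show (3:ℕ) = (1 + 1) + 1 from rfl, rep_peel] at H
    replace H := acc_e_at f H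
    rw [rep_peel, rep_peel] at H
    simp only [List.replicate, List.nil_append] at H
    rw [hu, show cOf 0 = (1:Fin 7) from rfl, austep _ (some ()) _ _ 1 4 4 6,
      austep _ (some ()) _ _ 4 6 4 7, austep _ none _ _ 4 7 6 0] at H
    exact dead_stuck f _ _ _ H
  · rw [show r + 4 = (((r + 1) + 1) + 1) + 1 by ring, rep_peel] at H
    replace H := acc_e_at f H
    rw [rep_peel] at H
    rw [hu, show cOf 0 = (1:Fin 7) from rfl, austep _ (some ()) _ _ 1 4 4 6, rep_peel,
      austep _ (some ()) _ _ 4 6 4 7, rep_peel, austep _ (some ()) _ _ 4 7 0 5] at H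
    obtain ⟨t, ht1, ht2, ht3, ht4⟩ := slowR_sound f r (c + 1) H
    refine ⟨t + 1, by omega, by omega, ?_, ?_⟩
    · rw [show c + (t + 1) - 1 = c + 1 + t - 1 by omega]; exact ht3
    · intro s hs
      rcases Nat.eq_zero_or_pos s with hs0 | hs0
      · subst hs0; rw [Nat.add_zero, hu]; simp
      · rw [show c + s = c + 1 + (s - 1) by omega]
        exact ht4 (s - 1) (by omega)
  -- us = 1 cases
  · exfalso
    simp only [List.replicate, List.nil_append] at H
    replace H := acc_e_at f H
    rw [hu, show cOf 1 = (2:Fin 7) from rfl, austep _ none _ _ 2 4 6 0] at H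
    exact dead_stuck f _ _ _ H
  · exfalso
    rw [rep_peel] at H
    replace H := acc_e_at f H
    simp only [List.replicate, List.nil_append] at H
    rw [hu, show cOf 1 = (2:Fin 7) from rfl, austep _ none _ _ 2 4 6 0] at H
    exact dead_stuck f _ _ _ H
  · exfalso
    rw [show (2:ℕ) = 1 + 1 from rfl, rep_peel] at H
    replace H := acc_e_at f H
    rw [rep_peel] at H
    simp only [List.replicate, List.nil_append] at H
    rw [hu, show cOf 1 = (2:Fin 7) from rfl, austep _ (some ()) _ _ 2 4 4 6,
      austep _ none _ _ 4 6 6 0] at H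
    exact dead_stuck f _ _ _ H
  · exfalso
    rw [show (3:ℕ) = (1 + 1) + 1 from rfl, rep_peel] at H
    replace H := acc_e_at f H
    rw [rep_peel, rep_peel] at H
    simp only [List.replicate, List.nil_append] at H
    rw [hu, show cOf 1 = (2:Fin 7) from rfl, austep _ (some ()) _ _ 2 4 4 6,
      austep _ (some ()) _ _ 4 6 4 7, austep _ none _ _ 4 7 6 0] at H
    exact dead_stuck f _ _ _ H
  · rw [show r + 4 = (((r + 1) + 1) + 1) + 1 by ring, rep_peel] at H
    replace H := acc_e_at f H
    rw [rep_peel] at H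
    rw [hu, show cOf 1 = (2:Fin 7) from rfl, austep _ (some ()) _ _ 2 4 4 6, rep_peel,
      austep _ (some ()) _ _ 4 6 4 7, rep_peel, austep _ (some ()) _ _ 4 7 0 5] at H
    obtain ⟨t, ht1, ht2, ht3, ht4⟩ := slowR_sound f r (c + 1) H
    refine ⟨t + 1, by omega, by omega, ?_, ?_⟩
    · rw [show c + (t + 1) - 1 = c + 1 + t - 1 by omega]; exact ht3
    · intro s hs
      rcases Nat.eq_zero_or_pos s with hs0 | hs0
      · subst hs0; rw [Nat.add_zero, hu]; simp
      · rw [show c + s = c + 1 + (s - 1) by omega]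
        exact ht4 (s - 1) (by omega)

/-- anchor soundness: the first symbol is not plain. -/
lemma anchor_sound (j c : ℕ) (hj : 1 ≤ j)
    (H : M.Acc f (List.replicate j (some ()) ++ [none, none]) ((0 : Fin 7), (25 : Fin 26))
      (hsl f c)) :
    us f c ≠ 0 := by
  intro hu
  rw [show j = (j - 1) + 1 by omega, rep_peel] at H
  replace H := acc_e_at f H
  match hj2 : j - 1 with
  | 0 =>
    rw [hj2] at H
    simp only [List.replicate, List.nil_append] at H
    rw [hu, show cOf 0 = (1:Fin 7) from rfl, austep _ none _ _ 1 25 6 0] at H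
    exact dead_stuck f _ _ _ H
  | r + 1 =>
    rw [hj2, rep_peel] at H
    rw [hu, show cOf 0 = (1:Fin 7) from rfl, austep _ (some ()) _ _ 1 25 6 0] at H
    exact dead_stuck f _ _ _ H

end UPproof
namespace UPproof

variable (f : M.Strategy)

/-- one a-mode cycle (universal chooses to continue). -/
lemma a_step (j c : ℕ) (hj : 3 ≤ j) (hne : us f c ≠ 2)
    (H : M.Acc f (List.replicate j (some ()) ++ [none, none]) ((0 : Fin 7), (12 : Fin 26))
      (hsl f c)) :
    M.Acc f (List.replicate (j - 3) (some ()) ++ [none, none]) ((0 : Fin 7), (12 : Fin 26))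
      (hsl f (c + 1)) := by
  rw [show j = ((j - 3 + 1) + 1) + 1 by omega, rep_peel] at H
  replace H := acc_e_at f H
  rw [rep_peel] at H
  rcases fin3cases (us f c) with hu | hu | hu
  rotate_right
  · exact absurd hu hne
  · rw [hu, show cOf 0 = (1:Fin 7) from rfl, austep _ (some ()) _ _ 1 12 4 13, rep_peel,
      austep _ (some ()) _ _ 4 13 0 12] at H
    exact H
  · rw [hu, show cOf 1 = (2:Fin 7) from rfl, acc_cons, step_trig] at H
    have H' := H.2 0
    rw [if_pos (show ((0 : Fin 4) : Fin 4).val ≤ 1 by norm_num)] at H'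
    rw [rep_peel, austep _ (some ()) _ _ 4 13 0 12] at H'
    exact H'

/-- triggering at a mark enters b-mode. -/
lemma a_trig (j c : ℕ) (hj : 3 ≤ j) (hm : us f c = 1)
    (H : M.Acc f (List.replicate j (some ()) ++ [none, none]) ((0 : Fin 7), (12 : Fin 26))
      (hsl f c)) :
    M.Acc f (List.replicate (j - 3) (some ()) ++ [none, none]) ((0 : Fin 7), (15 : Fin 26))
      (hsl f (c + 1)) := by
  rw [show j = ((j - 3 + 1) + 1) + 1 by omega, rep_peel] at H
  replace H := acc_e_at f H
  rw [rep_peel] at H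
  rw [hm, show cOf 1 = (2:Fin 7) from rfl, acc_cons, step_trig] at H
  have H' := H.2 2
  rw [if_neg (show ¬ ((2 : Fin 4) : Fin 4).val ≤ 1 by norm_num)] at H'
  rw [rep_peel, austep _ (some ()) _ _ 4 14 0 15] at H'
  exact H'

lemma a_reach : ∀ (i c j : ℕ), (∀ s, s < i → us f (c + s) ≠ 2) → 3 * i ≤ j →
    M.Acc f (List.replicate j (some ()) ++ [none, none]) ((0 : Fin 7), (12 : Fin 26))
      (hsl f c) →
    M.Acc f (List.replicate (j - 3 * i) (some ()) ++ [none, none]) ((0 : Fin 7), (12 : Fin 26))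
      (hsl f (c + i)) := by
  intro i
  induction i with
  | zero => intro c j _ _ H; simpa using H
  | succ i ih =>
    intro c j hno hj H
    have H1 := a_step f j c (by omega) (by have := hno 0 (by omega); simpa using this) H
    have H2 := ih (c + 1) (j - 3)
      (fun s hs => by rw [show c + 1 + s = c + (s + 1) by omega]; exact hno (s + 1) (by omega))
      (by omega) H1
    rw [show j - 3 - 3 * i = j - 3 * (i + 1) by omega,
      show c + 1 + i = c + (i + 1) by omega] at H2
    exact H2

/-- the doubling chain: every mark position `q < e` forces `e = 2^k q`. -/
lemma chain (e : ℕ) (hEnd : us f (e - 1) = 2) (hNo : ∀ s, s < e - 1 → us f s ≠ 2)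
    (Ha : M.Acc f (List.replicate (4 * e) (some ()) ++ [none, none])
      ((0 : Fin 7), (12 : Fin 26)) (hsl f 0)) :
    ∀ (d q : ℕ), e - q ≤ d → 1 ≤ q → q < e → us f (q - 1) = 1 → ∃ k, e = 2 ^ k * q := by
  intro d
  induction d with
  | zero => intro q hd hq1 hqe _; omega
  | succ d ih =>
    intro q hd hq1 hqe hmark
    -- reach the mark in a-mode and trigger
    have Hr := a_reach f (q - 1) 0 (4 * e)
      (fun s hs => by
        rw [Nat.zero_add]
        exact hNo s (by omega)) (by omega) Ha
    rw [Nat.zero_add] at Hr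
    have Ht := a_trig f (4 * e - 3 * (q - 1)) (q - 1) (by omega)
      (by rw [show q - 1 = q - 1 by rfl]; exact hmark) Hr
    rw [show q - 1 + 1 = q by omega, show 4 * e - 3 * (q - 1) - 3 = 4 * e - 3 * q by omega]
      at Ht
    obtain ⟨t, ht1, hzeros, hcase⟩ := b_sound f (4 * e - 3 * q) q Ht
    rcases hcase with ⟨h2, hlen⟩ | ⟨h2, t₂, ht₂, hlen, hend2, hmid⟩
    · -- END found directly: e = 2q
      have hge : e - 1 ≤ q + t - 1 := by
        by_contra hc
        exact absurd h2 (hNo _ (by omega))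
      have hle : q + t - 1 ≤ e - 1 := by
        by_contra hc
        have h0 := hzeros (e - 1 - q) (by omega)
        rw [show q + (e - 1 - q) = e - 1 by omega] at h0
        rw [h0] at hEnd
        exact absurd hEnd (by simp)
      have hte : t = e - q := by omega
      have : e = 2 * q := by omega
      exact ⟨1, by rw [pow_one]; omega⟩
    · -- mark found at q + t - 1, END at q + t + t₂ - 1
      have hge : e - 1 ≤ q + t + t₂ - 1 := by
        by_contra hc
        exact absurd hend2 (hNo _ (by omega))
      have hle : q + t + t₂ - 1 ≤ e - 1 := by
        by_contra hc
        -- e - 1 sits strictly before the found END: contradiction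
        rcases lt_trichotomy (e - 1) (q + t - 1) with h | h | h
        · have h0 := hzeros (e - 1 - q) (by omega)
          rw [show q + (e - 1 - q) = e - 1 by omega] at h0
          rw [h0] at hEnd
          exact absurd hEnd (by simp)
        · rw [← h] at h2
          rw [h2] at hEnd
          exact absurd hEnd (by simp)
        · have h0 := hmid (e - 1 - (q + t)) (by omega)
          rw [show q + t + (e - 1 - (q + t)) = e - 1 by omega] at h0
          exact h0 hEnd
      have hte : q + t + t₂ = e := by omega
      have htq : t = q := by omega
      have h2q : us f (2 * q - 1) = 1 := by
        rw [show 2 * q - 1 = q + t - 1 by omega]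
        exact h2
      have h2qe : 2 * q < e := by omega
      obtain ⟨k, hk⟩ := ih (2 * q) (by omega) (by omega) h2qe h2q
      exact ⟨k + 1, by rw [pow_succ, hk]; ring⟩

/-- soundness: only powers of two are accepted. -/
lemma sound (m : ℕ) (H : M.Accepts (List.replicate m ())) : ∃ n, m = 2 ^ n := by
  obtain ⟨f, H⟩ := H
  rw [tape_eq, show M.init = ((4 : Fin 7), (0 : Fin 26)) from rfl, acc_cons, step_start] at H
  have Hbase := H.2 0
  have Ha := H.2 1
  have Hanch := H.2 2
  rw [show modeOf 0 = (1 : Fin 26) from rfl, austep _ none _ _ 4 1 0 4,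
    show ([] : List (Fin 3)) = hsl f 0 from rfl] at Hbase
  rw [show modeOf 1 = (2 : Fin 26) from rfl, austep _ none _ _ 4 2 0 12,
    show ([] : List (Fin 3)) = hsl f 0 from rfl] at Ha
  rw [show modeOf 2 = (3 : Fin 26) from rfl, austep _ none _ _ 4 3 0 25,
    show ([] : List (Fin 3)) = hsl f 0 from rfl] at Hanch
  rcases slow1_sound f (2 * m) 0 Hbase with ⟨_, hj⟩ | ⟨hne, e, he2, hlen, hEnd, hNo⟩
  · rcases hj with hj | hj
    · exact ⟨0, by omega⟩
    · exact ⟨1, by omega⟩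
  · -- m = 2e with e ≥ 2
    have hm : m = 2 * e := by omega
    have hanch := anchor_sound f (2 * m) 0 (by omega) Hanch
    have hmark : us f 0 = 1 := by
      rcases fin3cases (us f 0) with hu | hu | hu
      · exact absurd hu hanch
      · exact hu
      · exact absurd hu hne
    simp only [Nat.zero_add] at hEnd hNo
    rw [show 2 * m = 4 * e by omega] at Ha
    obtain ⟨k, hk⟩ := chain f e hEnd hNo Ha (e - 1) 1 (by omega) le_rfl (by omega)
      (by simpa using hmark)
    exact ⟨k + 1, by rw [pow_succ]; omega⟩

end UPproof
/-- The unary language `UPOWER = {1^m : m = 2^n for some n ≥ 0}` can be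
recognized by a PAFA: some PAFA over the unary alphabet `{1}` has language exactly UPOWER. -/
theorem upower_recognized_by_PAFA :
    ∃ A : PAFA Unit, A.lang = { w : List Unit | ∃ n : ℕ, w.length = 2 ^ n } := by
  refine ⟨UPproof.M, ?_⟩
  ext w
  have hw : w = List.replicate w.length () := by
    induction w with
    | nil => simp
    | cons a l ih =>
      simp only [List.length_cons, List.replicate_succ]
      rw [← ih]
  simp only [PAFA.lang, Set.mem_setOf_eq]
  constructor
  · intro hAcc
    rw [hw] at hAcc
    exact UPproof.sound w.length hAcc
  · rintro ⟨n, hn⟩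
    rw [hw, hn]
    exact UPproof.complete n
end

section
/- The language TWIN = {w c w : w ∈ {0,1}*} over the alphabet {0,1,c} can be recognized by a PAFA: there exists a PAFA over the alphabet {0,1,c} whose language is exactly TWIN. -/
/-- The input alphabet {0, 1, c}. -/
inductive TSym : Type
  | zero : TSym
  | one : TSym
  | c : TSym

/-- Encoding of a binary string `w ∈ {0,1}*` (a list of Booleans) as a string over {0,1,c}. -/
def bitToTSym (b : Bool) : TSym := if b then TSym.one else TSym.zero

namespace TwinPAFA

/-- encode a bit as a game symbol -/
def encB (b : Bool) : Fin 3 := if b then 1 else 0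

/-- common state holding pending response `r` -/
def aSt (r : Fin 3) : Fin 9 := ⟨r.val + 2, by omega⟩

lemma aSt_val (r : Fin 3) : (aSt r).val = r.val + 2 := rfl

/-- the deterministic (non-branching) universal transition function -/
def step1 : Fin 9 × Fin 4 → Option TSym → Fin 9 × Fin 4 := fun s σ =>
  if 2 ≤ s.1.val ∧ s.1.val ≤ 4 then
    if s.2.val = 0 then
      match σ with
      | some TSym.zero => if s.1.val = 2 then ((1 : Fin 9), s.2) else ((8 : Fin 9), s.2)
      | some TSym.one  => if s.1.val = 3 then ((1 : Fin 9), s.2) else ((8 : Fin 9), s.2)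
      | some TSym.c    => if s.1.val = 4 then ((5 : Fin 9), (1 : Fin 4)) else ((8 : Fin 9), s.2)
      | none           => ((8 : Fin 9), s.2)
    else if s.2.val = 3 then
      match σ with
      | some TSym.zero => if s.1.val = 2 then ((1 : Fin 9), s.2) else ((8 : Fin 9), s.2)
      | some TSym.one  => if s.1.val = 3 then ((1 : Fin 9), s.2) else ((8 : Fin 9), s.2)
      | some TSym.c    => ((8 : Fin 9), s.2)
      | none           => if s.1.val = 4 then ((7 : Fin 9), s.2) else ((8 : Fin 9), s.2)
    else ((8 : Fin 9), s.2)
  else if s.1.val = 5 then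
    if s.2.val = 2 then
      match σ with
      | some TSym.c => ((1 : Fin 9), (3 : Fin 4))
      | some _      => ((5 : Fin 9), s.2)
      | none        => ((8 : Fin 9), s.2)
    else if s.2.val = 1 then
      match σ with
      | none   => ((7 : Fin 9), s.2)
      | some _ => ((5 : Fin 9), s.2)
    else ((8 : Fin 9), s.2)
  else if s.1.val = 6 then ((5 : Fin 9), s.2)
  else if s.1.val = 7 then ((7 : Fin 9), s.2)
  else ((8 : Fin 9), s.2)

def delU (s : Fin 9 × Fin 4) (σ : Option TSym) :
    (Fin 9 × Fin 4) ⊕ ((Fin 3 ⊕ Fin 2) → Fin 9 × Fin 4) :=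
  if s.1.val = 0 then
    Sum.inr (fun g => match g with
      | Sum.inl _ => ((7 : Fin 9), s.2)
      | Sum.inr d => if d.val = 0 then ((1 : Fin 9), (0 : Fin 4)) else ((6 : Fin 9), (2 : Fin 4)))
  else Sum.inl (step1 s σ)

@[reducible]
def M : PAFA TSym where
  kc := 9
  kp := 4
  g := 3
  d := 2
  g_ge := by norm_num
  d_ge := by norm_num
  isUniv := fun s => decide (s.1.val ≠ 1)
  δE := fun q => if q.val = 1 then Sum.inr (fun γ => aSt γ) else Sum.inl q
  δU := delU
  pub_private := by
    intro s σ fam hfam γ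
    unfold delU at hfam
    by_cases h0 : s.1.val = 0
    · rw [if_pos h0] at hfam
      injection hfam with h
      rw [← h]
    · rw [if_neg h0] at hfam
      exact absurd hfam (by simp)
  init := ((0 : Fin 9), (0 : Fin 4))
  qa := (7 : Fin 9)

lemma isUniv_eval (s : Fin 9 × Fin 4) : M.isUniv s = decide (s.1.val ≠ 1) := rfl
lemma delU_eval (s : Fin 9 × Fin 4) (σ : Option TSym) : M.δU s σ = delU s σ := rfl
lemma delE_eval (q : Fin 9) :
    M.δE q = if q.val = 1 then Sum.inr (fun γ => aSt γ) else Sum.inl q := rfl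
lemma qa_eval : M.qa = (7 : Fin 9) := rfl

/-- history of responses after `n` existential moves -/
def hist (f : Fin 9 × List (Fin 3) → Fin 3) : ℕ → List (Fin 3)
  | 0 => []
  | n + 1 => hist f n ++ [f ((1 : Fin 9), hist f n)]

/-- the deterministic response sequence determined by `f` -/
def rho (f : Fin 9 × List (Fin 3) → Fin 3) (n : ℕ) : Fin 3 := f ((1 : Fin 9), hist f n)

lemma hist_succ (f : Fin 9 × List (Fin 3) → Fin 3) (n : ℕ) :
    hist f (n + 1) = hist f n ++ [rho f n] := rfl

variable (f : Fin 9 × List (Fin 3) → Fin 3)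

lemma acc_nil (st : Fin 9 × Fin 4) (h : List (Fin 3)) :
    M.Acc f [] st h ↔ st.1 = (7 : Fin 9) := Iff.rfl

lemma acc_univ (σ : Option TSym) (rest : List (Option TSym)) (c9 : Fin 9) (p : Fin 4)
    (h : List (Fin 3)) (h1 : c9.val ≠ 1) (h0 : c9.val ≠ 0) :
    M.Acc f (σ :: rest) (c9, p) h ↔ M.Acc f rest (step1 (c9, p) σ) h := by
  show M.Step f σ (c9, p) h _ ↔ _
  unfold PAFA.Step
  rw [isUniv_eval, delU_eval]
  unfold delU
  simp only [decide_eq_true_eq]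
  rw [if_neg h0, if_pos h1]

lemma acc_exist (σ : Option TSym) (rest : List (Option TSym)) (p : Fin 4)
    (h : List (Fin 3)) :
    M.Acc f (σ :: rest) ((1 : Fin 9), p) h ↔
      M.Acc f rest (aSt (f ((1 : Fin 9), h)), p) (h ++ [f ((1 : Fin 9), h)]) := by
  show M.Step f σ ((1 : Fin 9), p) h _ ↔ _
  unfold PAFA.Step
  rw [isUniv_eval, delE_eval]
  norm_num

lemma acc_start (σ : Option TSym) (rest : List (Option TSym)) (p : Fin 4)
    (h : List (Fin 3)) :
    M.Acc f (σ :: rest) ((0 : Fin 9), p) h ↔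
      ((∀ γ : Fin 3, M.Acc f rest ((7 : Fin 9), p) (h ++ [γ])) ∧
       M.Acc f rest ((1 : Fin 9), (0 : Fin 4)) h ∧
       M.Acc f rest ((6 : Fin 9), (2 : Fin 4)) h) := by
  show M.Step f σ ((0 : Fin 9), p) h _ ↔ _
  unfold PAFA.Step
  rw [isUniv_eval, delU_eval]
  unfold delU
  norm_num
  refine and_congr_right_iff.mp ?_
  constructor
  · rintro ⟨hγ, hδ⟩
    refine ⟨fun γ => hγ γ, ?_, ?_⟩
    · simpa using hδ (0 : Fin 2)
    · simpa using hδ (1 : Fin 2)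
  · rintro ⟨hγ, h1, h6⟩
    refine ⟨fun γ => hγ γ, fun δ' => ?_⟩
    rcases (by decide : ∀ d : Fin 2, d = 0 ∨ d = 1) δ' with rfl | rfl
    · simpa using h1
    · simpa using h6

lemma acc_sinkA : ∀ (rest : List (Option TSym)) (h : List (Fin 3)) (p : Fin 4),
    M.Acc f rest ((7 : Fin 9), p) h := by
  intro rest
  induction rest with
  | nil => intro h p; exact (acc_nil f _ _).2 rfl
  | cons σ rest ih =>
      intro h p
      rw [acc_univ f σ rest _ p h (by decide) (by decide)]
      exact ih h p

lemma acc_sinkR : ∀ (rest : List (Option TSym)) (h : List (Fin 3)) (p : Fin 4),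
    ¬ M.Acc f rest ((8 : Fin 9), p) h := by
  intro rest
  induction rest with
  | nil => intro h p hacc; exact absurd ((acc_nil f _ _).1 hacc) (by simp)
  | cons σ rest ih =>
      intro h p hacc
      rw [acc_univ f σ rest _ p h (by decide) (by decide)] at hacc
      exact ih h p hacc

/-- duplicate every tape symbol -/
def dd (l : List (Option TSym)) : List (Option TSym) := l.flatMap (fun σ => [σ, σ])

lemma dd_nil : dd [] = [] := rfl
lemma dd_cons (a : Option TSym) (l : List (Option TSym)) : dd (a :: l) = a :: a :: dd l := rfl
lemma dd_append (l₁ l₂ : List (Option TSym)) : dd (l₁ ++ l₂) = dd l₁ ++ dd l₂ := by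
  simp [dd]

lemma tape_eq (x : List TSym) :
    PAFA.tape x = none :: none :: (dd (x.map some) ++ [none, none]) := by
  simp [PAFA.tape, dd, List.flatMap_append]

lemma fin3_cases : ∀ r : Fin 3, r = 0 ∨ r = 1 ∨ r = 2 := by decide

lemma stepL_none (r : Fin 3) :
    step1 (aSt r, (0 : Fin 4)) none = ((8 : Fin 9), (0 : Fin 4)) := by
  rcases fin3_cases r with rfl | rfl | rfl <;> decide

lemma stepL_zero (r : Fin 3) :
    step1 (aSt r, (0 : Fin 4)) (some TSym.zero) =
      if r = 0 then ((1 : Fin 9), (0 : Fin 4)) else ((8 : Fin 9), (0 : Fin 4)) := by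
  rcases fin3_cases r with rfl | rfl | rfl <;> decide

lemma stepL_one (r : Fin 3) :
    step1 (aSt r, (0 : Fin 4)) (some TSym.one) =
      if r = 1 then ((1 : Fin 9), (0 : Fin 4)) else ((8 : Fin 9), (0 : Fin 4)) := by
  rcases fin3_cases r with rfl | rfl | rfl <;> decide

lemma stepL_c (r : Fin 3) :
    step1 (aSt r, (0 : Fin 4)) (some TSym.c) =
      if r = 2 then ((5 : Fin 9), (1 : Fin 4)) else ((8 : Fin 9), (0 : Fin 4)) := by
  rcases fin3_cases r with rfl | rfl | rfl <;> decide

lemma stepR_none (r : Fin 3) :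
    step1 (aSt r, (3 : Fin 4)) none =
      if r = 2 then ((7 : Fin 9), (3 : Fin 4)) else ((8 : Fin 9), (3 : Fin 4)) := by
  rcases fin3_cases r with rfl | rfl | rfl <;> decide

lemma stepR_zero (r : Fin 3) :
    step1 (aSt r, (3 : Fin 4)) (some TSym.zero) =
      if r = 0 then ((1 : Fin 9), (3 : Fin 4)) else ((8 : Fin 9), (3 : Fin 4)) := by
  rcases fin3_cases r with rfl | rfl | rfl <;> decide

lemma stepR_one (r : Fin 3) :
    step1 (aSt r, (3 : Fin 4)) (some TSym.one) =
      if r = 1 then ((1 : Fin 9), (3 : Fin 4)) else ((8 : Fin 9), (3 : Fin 4)) := by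
  rcases fin3_cases r with rfl | rfl | rfl <;> decide

lemma stepR_c (r : Fin 3) :
    step1 (aSt r, (3 : Fin 4)) (some TSym.c) = ((8 : Fin 9), (3 : Fin 4)) := by
  rcases fin3_cases r with rfl | rfl | rfl <;> decide

lemma sound_L : ∀ (t : List TSym) (n : ℕ),
    M.Acc f (dd (t.map some) ++ [none, none]) (aSt (rho f n), (0 : Fin 4)) (hist f (n + 1)) →
    ∃ (u : List Bool) (t' : List TSym),
      t = u.map bitToTSym ++ TSym.c :: t' ∧
      (∀ j (hj : j < u.length), rho f (n + j) = encB (u.get ⟨j, hj⟩)) ∧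
      rho f (n + u.length) = (2 : Fin 3) := by
  intro t
  induction t with
  | nil =>
      intro n hacc
      exfalso
      simp only [List.map_nil, dd_nil, List.nil_append] at hacc
      rw [acc_univ f _ _ _ _ _ (by rw [aSt_val]; omega) (by rw [aSt_val]; omega),
        stepL_none] at hacc
      exact acc_sinkR f _ _ _ hacc
  | cons σ t ih =>
      intro n hacc
      simp only [List.map_cons, dd_cons, List.cons_append] at hacc
      rw [acc_univ f _ _ _ _ _ (by rw [aSt_val]; omega) (by rw [aSt_val]; omega)] at hacc
      cases σ with
      | zero =>
          rw [stepL_zero] at hacc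
          by_cases hr : rho f n = 0
          · rw [if_pos hr, acc_exist] at hacc
            obtain ⟨u, t', ht, hspell, hend⟩ := ih (n + 1) hacc
            refine ⟨false :: u, t', by simp [ht, bitToTSym], ?_, ?_⟩
            · intro j hj
              cases j with
              | zero => simpa [encB] using hr
              | succ j =>
                  rw [show n + (j + 1) = n + 1 + j by omega]
                  exact hspell j (by simpa using hj)
            · rw [show n + (false :: u).length = n + 1 + u.length by simp; omega]
              exact hend
          · rw [if_neg hr] at hacc
            exact absurd hacc (acc_sinkR f _ _ _)
      | one =>
          rw [stepL_one] at hacc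
          by_cases hr : rho f n = 1
          · rw [if_pos hr, acc_exist] at hacc
            obtain ⟨u, t', ht, hspell, hend⟩ := ih (n + 1) hacc
            refine ⟨true :: u, t', by simp [ht, bitToTSym], ?_, ?_⟩
            · intro j hj
              cases j with
              | zero => simpa [encB] using hr
              | succ j =>
                  rw [show n + (j + 1) = n + 1 + j by omega]
                  exact hspell j (by simpa using hj)
            · rw [show n + (true :: u).length = n + 1 + u.length by simp; omega]
              exact hend
          · rw [if_neg hr] at hacc
            exact absurd hacc (acc_sinkR f _ _ _)
      | c =>
          rw [stepL_c] at hacc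
          by_cases hr : rho f n = 2
          · refine ⟨[], t, by simp, ?_, by simpa using hr⟩
            intro j hj
            exact absurd hj (by simp)
          · rw [if_neg hr] at hacc
            exact absurd hacc (acc_sinkR f _ _ _)

lemma sound_R : ∀ (t : List TSym) (n : ℕ),
    M.Acc f (dd (t.map some) ++ [none, none]) (aSt (rho f n), (3 : Fin 4)) (hist f (n + 1)) →
    ∃ v : List Bool, t = v.map bitToTSym ∧
      (∀ j (hj : j < v.length), rho f (n + j) = encB (v.get ⟨j, hj⟩)) ∧
      rho f (n + v.length) = (2 : Fin 3) := by
  intro t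
  induction t with
  | nil =>
      intro n hacc
      simp only [List.map_nil, dd_nil, List.nil_append] at hacc
      rw [acc_univ f _ _ _ _ _ (by rw [aSt_val]; omega) (by rw [aSt_val]; omega),
        stepR_none] at hacc
      by_cases hr : rho f n = 2
      · refine ⟨[], by simp, ?_, by simpa using hr⟩
        intro j hj
        exact absurd hj (by simp)
      · rw [if_neg hr] at hacc
        exact absurd hacc (acc_sinkR f _ _ _)
  | cons σ t ih =>
      intro n hacc
      simp only [List.map_cons, dd_cons, List.cons_append] at hacc
      rw [acc_univ f _ _ _ _ _ (by rw [aSt_val]; omega) (by rw [aSt_val]; omega)] at hacc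
      cases σ with
      | zero =>
          rw [stepR_zero] at hacc
          by_cases hr : rho f n = 0
          · rw [if_pos hr, acc_exist] at hacc
            obtain ⟨v, ht, hspell, hend⟩ := ih (n + 1) hacc
            refine ⟨false :: v, by simp [ht, bitToTSym], ?_, ?_⟩
            · intro j hj
              cases j with
              | zero => simpa [encB] using hr
              | succ j =>
                  rw [show n + (j + 1) = n + 1 + j by omega]
                  exact hspell j (by simpa using hj)
            · rw [show n + (false :: v).length = n + 1 + v.length by simp; omega]
              exact hend
          · rw [if_neg hr] at hacc
            exact absurd hacc (acc_sinkR f _ _ _)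
      | one =>
          rw [stepR_one] at hacc
          by_cases hr : rho f n = 1
          · rw [if_pos hr, acc_exist] at hacc
            obtain ⟨v, ht, hspell, hend⟩ := ih (n + 1) hacc
            refine ⟨true :: v, by simp [ht, bitToTSym], ?_, ?_⟩
            · intro j hj
              cases j with
              | zero => simpa [encB] using hr
              | succ j =>
                  rw [show n + (j + 1) = n + 1 + j by omega]
                  exact hspell j (by simpa using hj)
            · rw [show n + (true :: v).length = n + 1 + v.length by simp; omega]
              exact hend
          · rw [if_neg hr] at hacc
            exact absurd hacc (acc_sinkR f _ _ _)
      | c =>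
          rw [stepR_c] at hacc
          exact absurd hacc (acc_sinkR f _ _ _)

lemma idleR_skip : ∀ (u : List Bool) (rest : List (Option TSym)) (h : List (Fin 3)),
    M.Acc f (dd ((u.map bitToTSym).map some) ++ rest) ((5 : Fin 9), (2 : Fin 4)) h ↔
      M.Acc f rest ((5 : Fin 9), (2 : Fin 4)) h := by
  intro u
  induction u with
  | nil => intro rest h; simp [dd]
  | cons b u ih =>
      intro rest h
      simp only [List.map_cons, dd_cons, List.cons_append]
      rw [acc_univ f _ _ _ _ _ (by decide) (by decide)]
      cases b
      · rw [show step1 ((5 : Fin 9), (2 : Fin 4)) (some (bitToTSym false)) =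
            ((5 : Fin 9), (2 : Fin 4)) by decide]
        rw [acc_univ f _ _ _ _ _ (by decide) (by decide)]
        rw [show step1 ((5 : Fin 9), (2 : Fin 4)) (some (bitToTSym false)) =
            ((5 : Fin 9), (2 : Fin 4)) by decide]
        exact ih rest h
      · rw [show step1 ((5 : Fin 9), (2 : Fin 4)) (some (bitToTSym true)) =
            ((5 : Fin 9), (2 : Fin 4)) by decide]
        rw [acc_univ f _ _ _ _ _ (by decide) (by decide)]
        rw [show step1 ((5 : Fin 9), (2 : Fin 4)) (some (bitToTSym true)) =
            ((5 : Fin 9), (2 : Fin 4)) by decide]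
        exact ih rest h

lemma idleL_acc : ∀ (t : List TSym) (h : List (Fin 3)),
    M.Acc f (dd (t.map some) ++ [none, none]) ((5 : Fin 9), (1 : Fin 4)) h := by
  intro t
  induction t with
  | nil =>
      intro h
      simp only [List.map_nil, dd_nil, List.nil_append]
      rw [acc_univ f _ _ _ _ _ (by decide) (by decide)]
      rw [show step1 ((5 : Fin 9), (1 : Fin 4)) none = ((7 : Fin 9), (1 : Fin 4)) by decide]
      exact acc_sinkA f _ _ _
  | cons σ t ih =>
      intro h
      simp only [List.map_cons, dd_cons, List.cons_append]
      rw [acc_univ f _ _ _ _ _ (by decide) (by decide)]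
      cases σ <;>
        · rw [show step1 ((5 : Fin 9), (1 : Fin 4)) (some _) = ((5 : Fin 9), (1 : Fin 4))
              by decide]
          rw [acc_univ f _ _ _ _ _ (by decide) (by decide)]
          rw [show step1 ((5 : Fin 9), (1 : Fin 4)) (some _) = ((5 : Fin 9), (1 : Fin 4))
              by decide]
          exact ih h

lemma compl_active (p : Fin 4) (hp : p = 0 ∨ p = 3) :
    ∀ (u : List Bool) (n : ℕ) (rest : List (Option TSym)),
    (∀ j (hj : j < u.length), rho f (n + j) = encB (u.get ⟨j, hj⟩)) →
    M.Acc f rest (aSt (rho f (n + u.length)), p) (hist f (n + u.length + 1)) →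
    M.Acc f (dd ((u.map bitToTSym).map some) ++ rest) (aSt (rho f n), p) (hist f (n + 1)) := by
  intro u
  induction u with
  | nil =>
      intro n rest _ hacc
      simp only [List.length_nil, Nat.add_zero] at hacc
      simpa [dd] using hacc
  | cons b u ih =>
      intro n rest hspell hacc
      have hr : rho f n = encB b := by simpa using hspell 0 (by simp)
      simp only [List.map_cons, dd_cons, List.cons_append]
      rw [acc_univ f _ _ _ _ _ (by rw [aSt_val]; omega) (by rw [aSt_val]; omega)]
      have hstep : step1 (aSt (rho f n), p) (some (bitToTSym b)) = ((1 : Fin 9), p) := by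
        rcases hp with rfl | rfl <;> cases b <;>
          simp only [show bitToTSym false = TSym.zero from rfl,
            show bitToTSym true = TSym.one from rfl, stepL_zero, stepL_one, stepR_zero,
            stepR_one, hr] <;> decide
      rw [hstep, acc_exist]
      have hspell' : ∀ j (hj : j < u.length), rho f (n + 1 + j) = encB (u.get ⟨j, hj⟩) := by
        intro j hj
        rw [show n + 1 + j = n + (j + 1) by omega]
        exact hspell (j + 1) (by simpa using hj)
      have hacc' : M.Acc f rest (aSt (rho f (n + 1 + u.length)), p)
          (hist f (n + 1 + u.length + 1)) := by
        rw [show n + 1 + u.length = n + (b :: u).length by simp; omega]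
        exact hacc
      exact ih (n + 1) rest hspell' hacc' 

lemma hist_len (f : Fin 9 × List (Fin 3) → Fin 3) : ∀ n, (hist f n).length = n := by
  intro n
  induction n with
  | zero => rfl
  | succ n ih => simp [hist, ih]

lemma encB_inj : ∀ a b : Bool, encB a = encB b → a = b := by decide

lemma encB_ne_two : ∀ a : Bool, encB a ≠ 2 := by decide

end TwinPAFA

/-- The language `TWIN = { w c w : w ∈ {0,1}* }` over the alphabet `{0,1,c}`
can be recognized by a PAFA. -/
theorem twin_recognized_by_PAFA :
    ∃ A : PAFA TSym,
      A.lang = { x : List TSym | ∃ w : List Bool,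
        x = w.map bitToTSym ++ TSym.c :: w.map bitToTSym } := by
  refine ⟨TwinPAFA.M, ?_⟩
  ext x
  simp only [PAFA.lang, Set.mem_setOf_eq]
  constructor
  · rintro ⟨f, hacc⟩
    have hacc' : TwinPAFA.M.Acc f
        (none :: none :: (TwinPAFA.dd (x.map some) ++ [none, none]))
        ((0 : Fin 9), (0 : Fin 4)) [] := by
      rw [← TwinPAFA.tape_eq]; exact hacc
    obtain ⟨-, hL, hR⟩ := (TwinPAFA.acc_start f _ _ _ _).1 hacc'
    rw [TwinPAFA.acc_exist] at hL
    have hL' : TwinPAFA.M.Acc f (TwinPAFA.dd (x.map some) ++ [none, none])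
        (TwinPAFA.aSt (TwinPAFA.rho f 0), (0 : Fin 4)) (TwinPAFA.hist f 1) := hL
    obtain ⟨u, t, hx, hspellL, hendL⟩ := TwinPAFA.sound_L f x 0 hL'
    rw [TwinPAFA.acc_univ f _ _ _ _ _ (by decide) (by decide),
      show TwinPAFA.step1 ((6 : Fin 9), (2 : Fin 4)) none = ((5 : Fin 9), (2 : Fin 4))
        by decide] at hR
    rw [hx, List.map_append, TwinPAFA.dd_append, List.append_assoc, List.map_cons,
      TwinPAFA.dd_cons, TwinPAFA.idleR_skip, List.cons_append, List.cons_append] at hR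
    rw [TwinPAFA.acc_univ f _ _ _ _ _ (by decide) (by decide),
      show TwinPAFA.step1 ((5 : Fin 9), (2 : Fin 4)) (some TSym.c) = ((1 : Fin 9), (3 : Fin 4))
        by decide, TwinPAFA.acc_exist] at hR
    have hR' : TwinPAFA.M.Acc f (TwinPAFA.dd ((t.map some)) ++ [none, none])
        (TwinPAFA.aSt (TwinPAFA.rho f 0), (3 : Fin 4)) (TwinPAFA.hist f 1) := hR
    obtain ⟨v, ht, hspellR, hendR⟩ := TwinPAFA.sound_R f t 0 hR'
    have hlen : u.length = v.length := by
      by_contra hne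
      rcases Nat.lt_or_ge u.length v.length with hlt | hge
      · have h1 := hspellR u.length hlt
        rw [hendL] at h1
        exact TwinPAFA.encB_ne_two _ h1.symm
      · have hlt : v.length < u.length := by omega
        have h1 := hspellL v.length hlt
        rw [hendR] at h1
        exact TwinPAFA.encB_ne_two _ h1.symm
    have huv : u = v := by
      refine List.ext_get hlen ?_
      intro i h1 h2
      refine TwinPAFA.encB_inj _ _ ?_
      rw [← hspellL i h1, ← hspellR i h2]
    exact ⟨u, by rw [hx, ht, huv]⟩
  · rintro ⟨w, rfl⟩
    obtain ⟨f, hf⟩ : ∃ F : Fin 9 × List (Fin 3) → Fin 3,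
        F = fun sh => (w.map TwinPAFA.encB).getD sh.2.length (2 : Fin 3) := ⟨_, rfl⟩
    refine ⟨f, ?_⟩
    have hrho : ∀ n, TwinPAFA.rho f n = (w.map TwinPAFA.encB).getD n 2 := by
      intro n
      show f ((1 : Fin 9), TwinPAFA.hist f n) = _
      rw [hf]
      simp only
      rw [TwinPAFA.hist_len]
    have hspell : ∀ j (hj : j < w.length),
        TwinPAFA.rho f (0 + j) = TwinPAFA.encB (w.get ⟨j, hj⟩) := by
      intro j hj
      rw [Nat.zero_add, hrho, List.getD_eq_getElem _ _ (by simpa using hj)]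
      simp
    have hend : TwinPAFA.rho f (0 + w.length) = 2 := by
      rw [Nat.zero_add, hrho, List.getD_eq_default _ _ (by simp)]
    rw [TwinPAFA.tape_eq,
      show TwinPAFA.M.init = ((0 : Fin 9), (0 : Fin 4)) from rfl, TwinPAFA.acc_start]
    refine ⟨fun γ => TwinPAFA.acc_sinkA f _ _ _, ?_, ?_⟩
    · rw [TwinPAFA.acc_exist]
      show TwinPAFA.M.Acc f _ (TwinPAFA.aSt (TwinPAFA.rho f 0), (0 : Fin 4))
        (TwinPAFA.hist f 1)
      rw [List.map_append, TwinPAFA.dd_append, List.append_assoc]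
      refine TwinPAFA.compl_active f 0 (Or.inl rfl) w 0 _ hspell ?_
      rw [hend, List.map_cons, TwinPAFA.dd_cons, List.cons_append, List.cons_append]
      rw [TwinPAFA.acc_univ f _ _ _ _ _ (by decide) (by decide),
        show TwinPAFA.step1 (TwinPAFA.aSt 2, (0 : Fin 4)) (some TSym.c) =
          ((5 : Fin 9), (1 : Fin 4)) by decide]
      rw [TwinPAFA.acc_univ f _ _ _ _ _ (by decide) (by decide),
        show TwinPAFA.step1 ((5 : Fin 9), (1 : Fin 4)) (some TSym.c) =
          ((5 : Fin 9), (1 : Fin 4)) by decide]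
      exact TwinPAFA.idleL_acc f _ _
    · rw [TwinPAFA.acc_univ f _ _ _ _ _ (by decide) (by decide),
        show TwinPAFA.step1 ((6 : Fin 9), (2 : Fin 4)) none = ((5 : Fin 9), (2 : Fin 4))
          by decide]
      rw [List.map_append, TwinPAFA.dd_append, List.append_assoc, List.map_cons,
        TwinPAFA.dd_cons, TwinPAFA.idleR_skip, List.cons_append, List.cons_append]
      rw [TwinPAFA.acc_univ f _ _ _ _ _ (by decide) (by decide),
        show TwinPAFA.step1 ((5 : Fin 9), (2 : Fin 4)) (some TSym.c) =
          ((1 : Fin 9), (3 : Fin 4)) by decide, TwinPAFA.acc_exist]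
      show TwinPAFA.M.Acc f _ (TwinPAFA.aSt (TwinPAFA.rho f 0), (3 : Fin 4))
        (TwinPAFA.hist f 1)
      refine TwinPAFA.compl_active f 3 (Or.inr rfl) w 0 _ hspell ?_
      rw [hend]
      rw [TwinPAFA.acc_univ f _ _ _ _ _ (by decide) (by decide),
        show TwinPAFA.step1 (TwinPAFA.aSt 2, (3 : Fin 4)) none = ((7 : Fin 9), (3 : Fin 4))
          by decide]
      exact TwinPAFA.acc_sinkA f _ _ _
end

section
/- The language USQUARE = {1^m : m = n^2 for some n ≥ 0} can be recognized by a PA1CA: there exists a PA1CA over the unary alphabet {1} whose language is exactly USQUARE. -/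
/-!
A realtime private alternating one-counter automaton (PA1CA) over input alphabet `α`:
a realtime private alternating finite automaton (PAFA) augmented with an integer counter,
initialized to 0, that is accessible only to the universal transitions.

* Common state components: `Fin kc`; private state components: `Fin kp`.
* Public game alphabet Γ = `Fin g`, private game alphabet Δ = `Fin d` (disjoint by
  construction, being the two summands of `Fin g ⊕ Fin d`), each of size at least 2.
* Tape symbols: `Option α`, with `none` the end-marker ¢.
* The counter status is a `Bool` (`true` means the counter is zero); counter increments are
  encoded as `Fin 3`, with `d : Fin 3` denoting the integer `(d : ℤ) - 1`, one of −1, 0, +1.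
* Existential transitions depend only on the common component (neither reading nor modifying
  the counter and not seeing the tape symbol); universal transitions additionally depend on
  the counter status, and each universal successor specifies a counter increment.
* Transitions return either a single successor (`Sum.inl`, a non-branching move) or a family
  of successors indexed by the relevant game alphabet (`Sum.inr`, a branching move).
* On input `w`, the automaton processes ¢ w ¢, making two transitions per tape symbol; this is
  realized by listing every tape symbol twice, one occurrence per transition.
-/
structure PA1CA (α : Type) where
  kc : ℕ
  kp : ℕ
  g : ℕ
  d : ℕ
  g_ge : 2 ≤ g
  d_ge : 2 ≤ d
  /-- the set of universal states (`true` = universal; the rest are existential) -/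
  isUniv : Fin kc × Fin kp → Bool
  /-- existential transition function -/
  δE : Fin kc → Fin kc ⊕ (Fin g → Fin kc)
  /-- universal transition function; the last `Bool` argument is the counter status -/
  δU : Fin kc × Fin kp → Option α → Bool →
    ((Fin kc × Fin kp) × Fin 3) ⊕ ((Fin g ⊕ Fin d) → (Fin kc × Fin kp) × Fin 3)
  /-- successors of universal branching moves indexed by public symbols have private component
  equal to the current one -/
  pub_private : ∀ s σ z fam, δU s σ z = Sum.inr fam →
    ∀ γ : Fin g, ((fam (Sum.inl γ)).1).2 = s.2
  /-- the initial state (s_{c0}, s_{p0}) -/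
  init : Fin kc × Fin kp
  /-- the accepting common component q_a -/
  qa : Fin kc

namespace PA1CA

variable {α : Type} (A : PA1CA α)

/-- An existential strategy: assigns a public game symbol to each pair of a common state
component and a finite sequence over Γ (the public moves seen so far). -/
abbrev Strategy := Fin A.kc × List (Fin A.g) → Fin A.g

/-- One transition from state `st` with counter value `c` and public-move history `h`,
reading tape symbol `σ`: existential branchings are resolved by the strategy `f`, universal
branchings are resolved in all possible ways, and `P` is the property required of each
successor configuration (with updated counter and history).  Non-branching moves leave the
history unchanged; branching moves labeled by public symbols append their Γ-label to the
history; private universal moves leave it unchanged.  Existential moves do not read or modify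
the counter. -/
def Step (f : A.Strategy) (σ : Option α) (st : Fin A.kc × Fin A.kp) (c : ℤ)
    (h : List (Fin A.g))
    (P : Fin A.kc × Fin A.kp → ℤ → List (Fin A.g) → Prop) : Prop :=
  if A.isUniv st then
    match A.δU st σ (decide (c = 0)) with
    | Sum.inl t => P t.1 (c + (t.2 : ℤ) - 1) h
    | Sum.inr fam =>
        (∀ γ : Fin A.g,
          P (fam (Sum.inl γ)).1 (c + ((fam (Sum.inl γ)).2 : ℤ) - 1) (h ++ [γ])) ∧
        (∀ δ' : Fin A.d,
          P (fam (Sum.inr δ')).1 (c + ((fam (Sum.inr δ')).2 : ℤ) - 1) h)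
  else
    match A.δE st.1 with
    | Sum.inl c' => P (c', st.2) c h
    | Sum.inr fam => P (fam (f (st.1, h)), st.2) c (h ++ [f (st.1, h)])

/-- All computation paths consistent with strategy `f`, from state `st`, counter `c`, history
`h`, on the given remaining tape (each tape symbol occurring twice, one occurrence per
transition), end in a state whose common component is `A.qa`. -/
def Acc (f : A.Strategy) :
    List (Option α) → Fin A.kc × Fin A.kp → ℤ → List (Fin A.g) → Prop
  | [], st, _, _ => st.1 = A.qa
  | σ :: rest, st, c, h => A.Step f σ st c h fun st' c' h' => Acc f rest st' c' h'

/-- The tape ¢ w ¢ with every tape symbol listed twice (two transitions per tape symbol);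
`none` is the end-marker ¢. -/
def tape (w : List α) : List (Option α) :=
  (none :: (w.map some) ++ [none]).flatMap fun σ => [σ, σ]

/-- `A` accepts `w` iff there is an existential strategy under which every consistent
computation path (with the counter initialized to 0) ends in a state with accepting common
component. -/
def Accepts (w : List α) : Prop :=
  ∃ f : A.Strategy, A.Acc f (tape w) A.init 0 []

/-- The language of `A`. -/
def lang : Set (List α) := { w | A.Accepts w }

end PA1CA

/-! ### The machine -/

namespace USQ

/-- common components: 0 = start0, 1 = start1, 2 = cA (existential), 3 = cM0 (just saw
unmarked symbol), 4 = cM1 (just saw marked symbol), 5 = accept sink, 6 = reject sink. -/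
abbrev c0 : Fin 7 := ⟨0, by omega⟩
abbrev c1 : Fin 7 := ⟨1, by omega⟩
abbrev cA : Fin 7 := ⟨2, by omega⟩
abbrev cM0 : Fin 7 := ⟨3, by omega⟩
abbrev cM1 : Fin 7 := ⟨4, by omega⟩
abbrev cAcc : Fin 7 := ⟨5, by omega⟩
abbrev cRej : Fin 7 := ⟨6, by omega⟩

/-- private components (modes): 0 = scanInit, 1 = scanM, 2 = scanU, 3 = up, 4 = skip1,
5 = down. -/
abbrev pI : Fin 6 := ⟨0, by omega⟩
abbrev pM : Fin 6 := ⟨1, by omega⟩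
abbrev pU : Fin 6 := ⟨2, by omega⟩
abbrev pUp : Fin 6 := ⟨3, by omega⟩
abbrev pSk : Fin 6 := ⟨4, by omega⟩
abbrev pDn : Fin 6 := ⟨5, by omega⟩

abbrev St := Fin 7 × Fin 6

def dE (c : Fin 7) : Fin 7 ⊕ (Fin 2 → Fin 7) :=
  if c = cA then Sum.inr (fun γ => if γ.val = 1 then cM1 else cM0) else Sum.inl c

def dU (s : St) (σ : Option Unit) (z : Bool) :
    St × Fin 3 ⊕ ((Fin 2 ⊕ Fin 2) → St × Fin 3) :=
  if s.1 = c0 then Sum.inr (fun x => match x with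
      | Sum.inl _ => ((cAcc, s.2), 1)
      | Sum.inr d => if d.val = 0 then ((c1, pI), 1) else ((c1, pUp), 1))
  else if s.1 = c1 then Sum.inl ((cA, s.2), 1)
  else if s.1 = cM0 then
    (match σ with
     | none => Sum.inl ((if s.2 = pU then cRej else cAcc, s.2), 1)
     | some _ =>
       if s.2 = pI then Sum.inl ((cRej, s.2), 1)
       else if s.2 = pM ∨ s.2 = pU then Sum.inl ((cA, pU), 1)
       else if s.2 = pUp then Sum.inl ((cA, pUp), 2)
       else if s.2 = pSk then Sum.inl ((cA, pDn), 1)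
       else Sum.inl ((cA, pDn), 0))
  else if s.1 = cM1 then
    (match σ with
     | none => Sum.inl ((if s.2 = pU then cRej else cAcc, s.2), 1)
     | some _ =>
       if s.2 = pUp then Sum.inl ((cA, pSk), 2)
       else if s.2 = pSk then Sum.inl ((cRej, s.2), 1)
       else if s.2 = pDn then Sum.inl (((if z then cAcc else cRej), pDn), 1)
       else Sum.inr (fun x => match x with
         | Sum.inl _ => ((cAcc, s.2), 1)
         | Sum.inr d => if d.val = 0 then ((cA, pM), 1) else ((cA, pUp), 1)))
  else Sum.inl ((s.1, s.2), 1)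

lemma dU_pub : ∀ (s : St) σ z fam, dU s σ z = Sum.inr fam →
    ∀ γ : Fin 2, ((fam (Sum.inl γ)).1).2 = s.2 := by
  rintro ⟨c, p⟩ σ z fam h γ
  rcases σ <;> unfold dU at h <;> dsimp only at h <;> split_ifs at h <;>
    first
      | (injection h with h; subst h; rfl)
      | exact absurd h (by simp)

@[reducible] def M : PA1CA Unit where
  kc := 7
  kp := 6
  g := 2
  d := 2
  g_ge := le_refl 2
  d_ge := le_refl 2
  isUniv s := decide (s.1 ≠ cA)
  δE := dE
  δU := dU
  pub_private := dU_pub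
  init := (c0, pI)
  qa := cAcc


@[simp] lemma M_isUniv (s : St) : M.isUniv s = decide (s.1 ≠ cA) := rfl
@[simp] lemma M_dE : M.δE = dE := rfl
@[simp] lemma M_dU : M.δU = dU := rfl
@[simp] lemma M_qa : M.qa = cAcc := rfl

/-- the accept sink accepts on any remaining tape -/
lemma acc_sink (f : M.Strategy) : ∀ (L : List (Option Unit)) (p : Fin 6) (c : ℤ)
    (h : List (Fin 2)), M.Acc f L (cAcc, p) c h := by
  intro L
  induction L with
  | nil => intro p c h; simp [PA1CA.Acc]
  | cons σ rest ih =>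
    intro p c h
    simp only [PA1CA.Acc, PA1CA.Step, M_isUniv, M_dU]
    rcases σ <;> simp [dU, ih, Fin.ext_iff]

/-- the reject sink rejects on any remaining tape -/
lemma rej_sink (f : M.Strategy) : ∀ (L : List (Option Unit)) (p : Fin 6) (c : ℤ)
    (h : List (Fin 2)), ¬ M.Acc f L (cRej, p) c h := by
  intro L
  induction L with
  | nil => intro p c h; simp [PA1CA.Acc]
  | cons σ rest ih =>
    intro p c h
    simp only [PA1CA.Acc, PA1CA.Step, M_isUniv, M_dU]
    rcases σ <;> simp [dU, ih, Fin.ext_iff]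

@[simp] lemma fv60 : ((0 : Fin 6) : ℕ) = 0 := rfl
@[simp] lemma fv61 : ((1 : Fin 6) : ℕ) = 1 := rfl
@[simp] lemma fv62 : ((2 : Fin 6) : ℕ) = 2 := rfl
@[simp] lemma fv63 : ((3 : Fin 6) : ℕ) = 3 := rfl
@[simp] lemma fv64 : ((4 : Fin 6) : ℕ) = 4 := rfl
@[simp] lemma fv65 : ((5 : Fin 6) : ℕ) = 5 := rfl
@[simp] lemma fv30 : ((0 : Fin 3) : ℕ) = 0 := rfl
@[simp] lemma fv31 : ((1 : Fin 3) : ℕ) = 1 := rfl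
@[simp] lemma fv32 : ((2 : Fin 3) : ℕ) = 2 := rfl
@[simp] lemma fv70 : ((0 : Fin 7) : ℕ) = 0 := rfl
@[simp] lemma fv71 : ((1 : Fin 7) : ℕ) = 1 := rfl
@[simp] lemma fv72 : ((2 : Fin 7) : ℕ) = 2 := rfl
@[simp] lemma fv73 : ((3 : Fin 7) : ℕ) = 3 := rfl
@[simp] lemma fv74 : ((4 : Fin 7) : ℕ) = 4 := rfl
@[simp] lemma fv75 : ((5 : Fin 7) : ℕ) = 5 := rfl
@[simp] lemma fv76 : ((6 : Fin 7) : ℕ) = 6 := rfl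
lemma iar1 (c : ℤ) : c + 2 - 1 = c + 1 := by ring
lemma iar2 (c : ℤ) : c + 0 - 1 = c - 1 := by ring

/-- the abstract behaviour of the machine on a list of boundary marks, as a function of the
mode (private component). -/
def Spec : List Bool → Fin 6 → ℤ → Prop
  | [], p, _ => p ≠ pU
  | b :: rest, ⟨0, _⟩, c => if b then Spec rest pM c ∧ Spec rest pUp c else False
  | b :: rest, ⟨1, _⟩, c => if b then Spec rest pM c ∧ Spec rest pUp c else Spec rest pU c
  | b :: rest, ⟨2, _⟩, c => if b then Spec rest pM c ∧ Spec rest pUp c else Spec rest pU c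
  | b :: rest, ⟨3, _⟩, c => if b then Spec rest pSk (c+1) else Spec rest pUp (c+1)
  | b :: rest, ⟨4, _⟩, c => if b then False else Spec rest pDn c
  | b :: rest, ⟨5, _⟩, c => if b then c = 0 else Spec rest pDn (c-1)

/-- the sequence of marks produced by strategy `f` starting from history `h`. -/
def mkList (f : Fin 7 × List (Fin 2) → Fin 2) : List (Fin 2) → ℕ → List Bool
  | _, 0 => []
  | h, j+1 => decide ((f (cA, h)).val = 1) :: mkList f (h ++ [f (cA, h)]) j

/-- the input portion of the tape: `j` ones, each listed twice. -/
def dupOnes : ℕ → List (Option Unit)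
  | 0 => []
  | j + 1 => some () :: some () :: dupOnes j

lemma bridge (f : M.Strategy) : ∀ (j : ℕ) (h : List (Fin 2)) (p : Fin 6) (c : ℤ),
    M.Acc f (dupOnes j ++ [none, none]) (cA, p) c h ↔ Spec (mkList f h j) p c := by
  intro j
  induction j with
  | zero =>
    intro h p c
    have hE : M.isUniv (cA, p) = false := by simp
    simp only [dupOnes, List.nil_append, PA1CA.Acc, PA1CA.Step, hE, M_dE, M_dU,
      Bool.false_eq_true, if_false, dE, if_pos rfl]
    set b := f (cA, h) with hb
    have hlt : b.val < 2 := b.isLt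
    have hbv : b.val = 0 ∨ b.val = 1 := by omega
    rcases hbv with hv | hv <;>
      simp [hv, PA1CA.Acc, PA1CA.Step, dU, Spec, mkList, Fin.ext_iff] <;>
      split_ifs <;> simp_all [Fin.ext_iff, PA1CA.Acc]
  | succ j ih =>
    intro h p c
    have hlt : (f (cA, h)).val < 2 := (f (cA, h)).isLt
    have hbv : (f (cA, h)).val = 0 ∨ (f (cA, h)).val = 1 := by omega
    rcases hbv with hv | hv <;>
      fin_cases p <;>
      simp [dupOnes, PA1CA.Acc, PA1CA.Step, dE, dU, hv, mkList, Spec, Fin.ext_iff, ih,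
        Fin.forall_fin_two, acc_sink, rej_sink, iar1, iar2, -Fin.val_eq_zero_iff] <;>
      first
        | exact rej_sink f _ _ _ _
        | exact acc_sink f _ _ _ _
        | (intro _ _; exact ⟨acc_sink f _ _ _ _, acc_sink f _ _ _ _⟩)
        | (by_cases hc : c = 0
           · simp only [if_pos hc]
             exact iff_of_true (acc_sink f _ _ _ _) hc
           · simp only [if_neg hc]
             exact iff_of_false (rej_sink f _ _ _ _) hc)
        | skip

lemma flatMap_map (w : List Unit) :
    (w.map some).flatMap (fun σ => [σ, σ]) = dupOnes w.length := by
  induction w with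
  | nil => simp [dupOnes]
  | cons a w ih => simp [dupOnes, ih]

lemma tape_eq (w : List Unit) :
    PA1CA.tape w = none :: none :: (dupOnes w.length ++ [none, none]) := by
  simp [PA1CA.tape, List.flatMap_cons, List.flatMap_append, flatMap_map]

lemma accepts_iff (w : List Unit) : M.Accepts w ↔
    ∃ f : M.Strategy,
      Spec (mkList f [] w.length) pI 0 ∧ Spec (mkList f [] w.length) pUp 0 := by
  refine exists_congr fun f => ?_
  rw [tape_eq]
  have key : M.Acc f (none :: none :: (dupOnes w.length ++ [none, none])) (c0, pI) 0 [] ↔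
      (M.Acc f (dupOnes w.length ++ [none, none]) (cA, pI) 0 [] ∧
       M.Acc f (dupOnes w.length ++ [none, none]) (cA, pUp) 0 []) := by
    simp [PA1CA.Acc, PA1CA.Step, dU, Fin.ext_iff, Fin.forall_fin_two, iar1, iar2,
      -Fin.val_eq_zero_iff]
    intro _ _
    exact ⟨acc_sink f _ _ _ _, acc_sink f _ _ _ _⟩
  rw [show M.init = (c0, pI) from rfl] at *
  rw [key, bridge f _ _ _ _, bridge f _ _ _ _]

lemma mkList_length (f : Fin 7 × List (Fin 2) → Fin 2) :
    ∀ (j : ℕ) (h : List (Fin 2)), (mkList f h j).length = j := by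
  intro j
  induction j with
  | zero => intro h; simp [mkList]
  | succ j ih => intro h; simp [mkList, ih]

lemma mkList_realize (L : List Bool) :
    ∀ (j i : ℕ) (h : List (Fin 2)), h.length = i → i + j = L.length →
      mkList (fun q => if L.getD q.2.length false then ⟨1, by omega⟩ else ⟨0, by omega⟩)
        h j = L.drop i := by
  intro j
  induction j with
  | zero =>
    intro i h hh hij
    rw [mkList, List.drop_eq_nil_of_le]; omega
  | succ j ih =>
    intro i h hh hij
    have hi : i < L.length := by omega
    rw [mkList, List.drop_eq_getElem_cons hi]
    have hgd : L.getD h.length false = L[i] := by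
      rw [hh]; exact List.getD_eq_getElem L false hi
    rcases hb : L[i] with _ | _ <;>
      simp only [hgd, hb, if_true, if_false] <;>
      rw [ih (i+1) _ (by simp [hh]) (by omega)] <;> simp [hb]

lemma exists_strategy_iff (m : ℕ) :
    (∃ f : M.Strategy, Spec (mkList f [] m) pI 0 ∧ Spec (mkList f [] m) pUp 0) ↔
    (∃ L : List Bool, L.length = m ∧ Spec L pI 0 ∧ Spec L pUp 0) := by
  constructor
  · rintro ⟨f, h1, h2⟩
    exact ⟨mkList f [] m, mkList_length f m [], h1, h2⟩
  · rintro ⟨L, hL, h1, h2⟩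
    refine ⟨((fun q => if L.getD q.2.length false then ⟨1, by omega⟩ else ⟨0, by omega⟩ :
      Fin 7 × List (Fin 2) → Fin 2) : M.Strategy), ?_⟩
    rw [mkList_realize L m 0 [] rfl (by omega)]
    simpa using ⟨h1, h2⟩

/-! ### Pure reasoning about `Spec` -/

lemma spec_down (k : ℕ) (rest : List Bool) (c : ℤ) :
    Spec (List.replicate k false ++ true :: rest) pDn c ↔ c = k := by
  induction k generalizing c with
  | zero => simp [Spec]
  | succ k ih =>
    rw [List.replicate_succ, List.cons_append]
    have : Spec ((false :: (List.replicate k false ++ true :: rest))) pDn c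
        = Spec (List.replicate k false ++ true :: rest) pDn (c - 1) := by
      simp [Spec]
    rw [this, ih]
    constructor <;> intro h <;> [skip; rw [h]] <;> push_cast at * <;> omega

lemma spec_up (k : ℕ) (rest : List Bool) (c : ℤ) :
    Spec (List.replicate k false ++ true :: rest) pUp c ↔ Spec rest pSk (c + k + 1) := by
  induction k generalizing c with
  | zero => simp [Spec]
  | succ k ih =>
    rw [List.replicate_succ, List.cons_append]
    have : Spec ((false :: (List.replicate k false ++ true :: rest))) pUp c
        = Spec (List.replicate k false ++ true :: rest) pUp (c + 1) := by
      simp [Spec]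
    rw [this, ih]
    have : c + 1 + k + 1 = c + (k + 1 : ℕ) + 1 := by push_cast; ring
    rw [this]

lemma spec_scan (k : ℕ) (rest : List Bool) (c : ℤ) (p : Fin 6) (hp : p = pM ∨ p = pU) :
    Spec (List.replicate k false ++ true :: rest) p c ↔
      Spec rest pM c ∧ Spec rest pUp c := by
  induction k generalizing p with
  | zero => rcases hp with rfl | rfl <;> simp [Spec]
  | succ k ih =>
    rw [List.replicate_succ, List.cons_append]
    rcases hp with rfl | rfl <;>
      · have := ih pU (Or.inr rfl)
        simp [Spec, this]

lemma scan2_decomp : ∀ (L : List Bool) (c : ℤ), Spec L pU c →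
    ∃ a rest, L = List.replicate a false ++ true :: rest ∧
      Spec rest pM c ∧ Spec rest pUp c := by
  intro L
  induction L with
  | nil => intro c h; exact absurd h (by simp [Spec])
  | cons b rest ih =>
    intro c h
    cases b with
    | true =>
      refine ⟨0, rest, by simp, ?_⟩
      simpa [Spec] using h
    | false =>
      have h' : Spec rest pU c := by simpa [Spec] using h
      obtain ⟨a, r, rfl, h1, h2⟩ := ih c h'
      exact ⟨a + 1, r, by simp [List.replicate_succ], h1, h2⟩

lemma scanM_decomp (L : List Bool) (c : ℤ) (h : Spec L pM c) :
    L = [] ∨ ∃ a rest, L = List.replicate a false ++ true :: rest ∧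
      Spec rest pM c ∧ Spec rest pUp c := by
  cases L with
  | nil => exact Or.inl rfl
  | cons b rest =>
    refine Or.inr ?_
    cases b with
    | true =>
      refine ⟨0, rest, by simp, ?_⟩
      simpa [Spec] using h
    | false =>
      have h' : Spec rest pU c := by simpa [Spec] using h
      obtain ⟨a, r, hre, h1, h2⟩ := scan2_decomp rest c h'
      exact ⟨a + 1, r, by simp [List.replicate_succ, hre], h1, h2⟩

lemma main_claim : ∀ (N : ℕ) (L : List Bool) (dd : ℕ), L.length ≤ N →
    Spec L pM 0 → Spec L pUp 0 → Spec L pSk (dd : ℤ) →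
    ∃ n, L.length = n * (n + dd + 1) := by
  intro N
  induction N with
  | zero =>
    intro L dd hlen _ _ _
    have : L = [] := by
      cases L with
      | nil => rfl
      | cons b rest => simp at hlen
    exact ⟨0, by simp [this]⟩
  | succ N ihN =>
    intro L dd hlen h1 h2 h3
    rcases scanM_decomp L 0 h1 with rfl | ⟨a, rest, rfl, hr1, hr2⟩
    · exact ⟨0, by simp⟩
    · cases a with
      | zero =>
        exact absurd h3 (by simp [Spec])
      | succ a =>
        rw [List.replicate_succ, List.cons_append] at h2 h3 hlen ⊢
        have h3' : Spec (List.replicate a false ++ true :: rest) pDn (dd : ℤ) := by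
          simpa [Spec] using h3
        have hda : (dd : ℤ) = a := (spec_down a rest _).mp h3'
        have hda' : dd = a := by exact_mod_cast hda
        subst hda'
        have hup : Spec rest pSk ((dd + 2 : ℕ) : ℤ) := by
          have := (spec_up (dd + 1) rest 0).mp (by rwa [List.replicate_succ,
            List.cons_append])
          convert this using 2
          push_cast; ring
        have hlen' : rest.length ≤ N := by
          simp only [List.length_cons, List.length_append, List.length_replicate] at hlen
          omega
        obtain ⟨n, hn⟩ := ihN rest (dd + 2) hlen' hr1 hr2 hup
        refine ⟨n + 1, ?_⟩
        simp only [List.length_cons, List.length_append, List.length_replicate,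
          List.length_cons, hn]
        have : (n + 1) * (n + 1 + dd + 1) = n * (n + (dd + 2) + 1) + dd + 2 := by ring
        omega

/-- the marked list with block lengths `2k+1, 2k+3, …` (`j` blocks). -/
def T : ℕ → ℕ → List Bool
  | 0, _ => []
  | j + 1, k => List.replicate (2 * k) false ++ true :: T j (k + 1)

lemma T_len : ∀ (j k : ℕ), (T j k).length = j * (2 * k + j) := by
  intro j
  induction j with
  | zero => intro k; simp [T]
  | succ j ih =>
    intro k
    simp only [T, List.length_append, List.length_replicate, List.length_cons, ih]
    ring

lemma spec_T_up (j k : ℕ) : Spec (T j k) pUp 0 := by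
  cases j with
  | zero => simp [T, Spec, Fin.ext_iff]
  | succ j =>
    rw [T, spec_up]
    cases j with
    | zero => simp [T, Spec, Fin.ext_iff]
    | succ j =>
      rw [T, show 2 * (k + 1) = (2 * k + 1) + 1 by ring, List.replicate_succ,
        List.cons_append]
      have : Spec (false :: (List.replicate (2 * k + 1) false ++ true :: T j (k + 2)))
          pSk (0 + (2 * k : ℕ) + 1) ↔
          Spec (List.replicate (2 * k + 1) false ++ true :: T j (k + 2)) pDn
            (0 + (2 * k : ℕ) + 1) := by
        simp [Spec]
      rw [this, spec_down]
      push_cast; ring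

lemma spec_T_scan : ∀ (j k : ℕ), Spec (T j k) pM 0 := by
  intro j
  induction j with
  | zero => intro k; simp [T, Spec, Fin.ext_iff]
  | succ j ih =>
    intro k
    rw [T, spec_scan _ _ _ pM (Or.inl rfl)]
    exact ⟨ih (k + 1), spec_T_up j (k + 1)⟩

lemma pure_iff (m : ℕ) :
    (∃ L : List Bool, L.length = m ∧ Spec L pI 0 ∧ Spec L pUp 0) ↔ ∃ n, m = n ^ 2 := by
  constructor
  · rintro ⟨L, rfl, h1, h2⟩
    cases L with
    | nil => exact ⟨0, by simp⟩
    | cons b rest =>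
      cases b with
      | false => exact absurd h1 (by simp [Spec])
      | true =>
        have h1' : Spec rest pM 0 ∧ Spec rest pUp 0 := by simpa [Spec] using h1
        have h2' : Spec rest pSk 1 := by simpa [Spec] using h2
        obtain ⟨n, hn⟩ := main_claim rest.length rest 1 le_rfl h1'.1 h1'.2
          (by exact_mod_cast h2')
        refine ⟨n + 1, ?_⟩
        simp only [List.length_cons, hn]
        ring
  · rintro ⟨n, rfl⟩
    refine ⟨T n 0, by simp [T_len]; ring, ?_, spec_T_up n 0⟩
    cases n with
    | zero => simp [T, Spec, Fin.ext_iff]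
    | succ n =>
      rw [T]
      simp only [mul_zero, List.replicate_zero, List.nil_append]
      have : Spec (true :: T n 1) pI 0 ↔ Spec (T n 1) pM 0 ∧ Spec (T n 1) pUp 0 := by
        simp [Spec]
      rw [this]
      exact ⟨spec_T_scan n 1, spec_T_up n 1⟩

end USQ


/-- The unary language `USQUARE = {1^m : m = n^2 for some n ≥ 0}` can be
recognized by a PA1CA: some PA1CA over the unary alphabet `{1}` has language exactly
USQUARE. -/
theorem usquare_recognized_by_PA1CA :
    ∃ A : PA1CA Unit, A.lang = { w : List Unit | ∃ n : ℕ, w.length = n ^ 2 } := by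
  refine ⟨USQ.M, ?_⟩
  ext w
  simp only [PA1CA.lang, Set.mem_setOf_eq]
  rw [USQ.accepts_iff, USQ.exists_strategy_iff, USQ.pure_iff]
end
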